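/- arXiv:2504.01364 — 14 statements merged into one kernel-verified Lean document; each statement's English description precedes it below -/
import Mathlib

section
/- For integers n ≥ 3, ℓ with -1 ≤ ℓ ≤ n-3, and i with 1 ≤ i ≤ (n-1-ℓ)/2, the graph G = K_{i+ℓ} + (I_i ∪ K_{n-2i-ℓ}) (the join of a clique on i+ℓ vertices with the disjoint union of an independent set of size i and a clique on n-2i-ℓ vertices) is the unique simple graph on n vertices whose nondecreasing degree list is: i+ℓ repeated i times, then n-i-1 repeated n-2i-ℓ times, then n-1 repeated i+ℓ times. -/
open Finset

/-- The graph `K_a + (I_b ∪ K_{n-a-b})` on `n` vertices: the first `a` vertices form a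
clique joined to everything, the next `b` vertices form an independent set, and the
remaining `n - a - b` vertices form a clique. -/
def stdG (n a b : ℕ) : SimpleGraph (Fin n) where
  Adj v w := v ≠ w ∧ ((v : ℕ) < a ∨ (w : ℕ) < a ∨ (a + b ≤ (v : ℕ) ∧ a + b ≤ (w : ℕ)))
  symm := by
    constructor
    intro v w h
    exact ⟨h.1.symm, by tauto⟩
  loopless := by
    constructor
    intro v h
    exact h.1 rfl

lemma count_filter_card {α : Type*} [DecidableEq α] (s : Finset α) (f : α → ℕ) (d : ℕ) :
    Multiset.count d (s.val.map f) = (s.filter fun v => f v = d).card := by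
  rw [Multiset.count_map, Finset.card, Finset.filter_val]
  congr 1
  exact Multiset.filter_congr fun x _ => eq_comm

lemma aux_iso (n a i : ℕ)
    (G : SimpleGraph (Fin n))
    (U S R : Finset (Fin n))
    (hU : U.card = a) (hS : S.card = i)
    (hUS : Disjoint U S) (hUR : Disjoint U R) (hSR : Disjoint S R)
    (hcov : ∀ v, v ∈ U ∨ v ∈ S ∨ v ∈ R)
    (hadj : ∀ v w, G.Adj v w ↔ v ≠ w ∧ (v ∈ U ∨ w ∈ U ∨ (v ∈ R ∧ w ∈ R))) :
    Nonempty (G ≃g stdG n a i) := by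
  classical
  set key : Fin n → ℕ := fun v => if v ∈ U then 0 else if v ∈ S then 1 else 2 with hkeydef
  have hkU : ∀ v, v ∈ U → key v = 0 := fun v hv => by simp [hkeydef, hv]
  have hkS : ∀ v, v ∈ S → key v = 1 := fun v hv => by
    simp [hkeydef, hv, disjoint_right.mp hUS hv]
  have hkR : ∀ v, v ∈ R → key v = 2 := fun v hv => by
    simp [hkeydef, disjoint_right.mp hUR hv, disjoint_right.mp hSR hv]
  have hkU' : ∀ v, key v = 0 → v ∈ U := by
    intro v h
    rcases hcov v with h'|h'|h'
    · exact h'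
    · rw [hkS v h'] at h; omega
    · rw [hkR v h'] at h; omega
  have hkUS' : ∀ v, key v ≤ 1 → v ∈ U ∨ v ∈ S := by
    intro v h
    rcases hcov v with h'|h'|h'
    · exact Or.inl h'
    · exact Or.inr h'
    · rw [hkR v h'] at h; omega
  set F : Fin n → Finset (Fin n) :=
    fun v => univ.filter fun w => key w < key v ∨ (key w = key v ∧ w < v) with hFdef
  have hself : ∀ v, v ∉ F v := by
    intro v
    simp [hFdef]
  have hFU : ∀ v, v ∈ U → F v ⊆ U := by
    intro v hv x hx
    simp only [hFdef, mem_filter] at hx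
    rcases hx.2 with h|h
    · rw [hkU v hv] at h; omega
    · exact hkU' x (by rw [h.1, hkU v hv])
  have hUF : ∀ v, v ∉ U → U ⊆ F v := by
    intro v hv u hu
    simp only [hFdef, mem_filter]
    refine ⟨mem_univ _, Or.inl ?_⟩
    rw [hkU u hu]
    rcases hcov v with h|h|h
    · exact absurd h hv
    · rw [hkS v h]; omega
    · rw [hkR v h]; omega
  have hlt_a : ∀ v, (F v).card < a ↔ v ∈ U := by
    intro v
    constructor
    · intro h
      by_contra hv
      have := card_le_card (hUF v hv)
      omega
    · intro hv
      have hss : F v ⊂ U := ⟨hFU v hv, fun h => hself v (h hv)⟩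
      have := card_lt_card hss
      omega
  have hUScard : (U ∪ S).card = a + i := by
    rw [card_union_of_disjoint hUS, hU, hS]
  have hFUS : ∀ v, v ∈ U ∪ S → F v ⊆ U ∪ S := by
    intro v hv x hx
    simp only [hFdef, mem_filter] at hx
    have hkv : key v ≤ 1 := by
      rcases mem_union.mp hv with h|h
      · exact (hkU v h).le.trans (by omega)
      · exact (hkS v h).le
    have hkx : key x ≤ 1 := by
      rcases hx.2 with h|h
      · omega
      · exact h.1.le.trans hkv
    rcases hkUS' x hkx with h|h
    · exact mem_union_left _ h
    · exact mem_union_right _ h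
  have hUSF : ∀ v, v ∉ U ∪ S → U ∪ S ⊆ F v := by
    intro v hv u hu
    have hkv : key v = 2 := by
      rcases hcov v with h|h|h
      · exact absurd (mem_union_left _ h) hv
      · exact absurd (mem_union_right _ h) hv
      · exact hkR v h
    simp only [hFdef, mem_filter]
    refine ⟨mem_univ _, Or.inl ?_⟩
    have : key u ≤ 1 := by
      rcases mem_union.mp hu with h|h
      · exact (hkU u h).le.trans (by omega)
      · exact (hkS u h).le
    omega
  have hlt_ai : ∀ v, (F v).card < a + i ↔ v ∈ U ∪ S := by
    intro v
    constructor
    · intro h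
      by_contra hv
      have := card_le_card (hUSF v hv)
      omega
    · intro hv
      have hss : F v ⊂ U ∪ S := ⟨hFUS v hv, fun h => hself v (h hv)⟩
      have := card_lt_card hss
      omega
  have hFlt : ∀ v, (F v).card < n := by
    intro v
    have hss : F v ⊂ univ := ⟨subset_univ _, fun h => hself v (h (mem_univ v))⟩
    simpa using card_lt_card hss
  have hmono : ∀ v w : Fin n, key v < key w ∨ (key v = key w ∧ v < w) →
      (F v).card < (F w).card := by
    intro v w h
    have hss : F v ⊂ F w := by
      constructor
      · intro x hx
        simp only [hFdef, mem_filter] at hx ⊢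
        refine ⟨mem_univ _, ?_⟩
        rcases hx.2 with h1|h1 <;> rcases h with h2|h2
        · exact Or.inl (by omega)
        · exact Or.inl (by omega)
        · exact Or.inl (by omega)
        · exact Or.inr ⟨by omega, lt_trans h1.2 h2.2⟩
      · intro hsub
        have hm : v ∈ F w := by
          simp only [hFdef, mem_filter]
          exact ⟨mem_univ _, by tauto⟩
        exact hself v (hsub hm)
    exact card_lt_card hss
  have hinj : Function.Injective fun v : Fin n => (F v).card := by
    intro v w h
    simp only at h
    by_contra hne
    rcases lt_trichotomy (key v) (key w) with hk|hk|hk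
    · have := hmono v w (Or.inl hk); omega
    · rcases lt_trichotomy v w with hv|hv|hv
      · have := hmono v w (Or.inr ⟨hk, hv⟩); omega
      · exact hne hv
      · have := hmono w v (Or.inr ⟨hk.symm, hv⟩); omega
    · have := hmono w v (Or.inl hk); omega
  set e0 : Fin n → Fin n := fun v => ⟨(F v).card, hFlt v⟩ with he0
  have he0inj : Function.Injective e0 := by
    intro v w h
    exact hinj (by simpa [he0, Fin.ext_iff] using h)
  have hbij : Function.Bijective e0 := Finite.injective_iff_bijective.mp he0inj
  have hR_iff : ∀ v, a + i ≤ (F v).card ↔ v ∈ R := by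
    intro v
    rw [← not_lt, hlt_ai]
    constructor
    · intro h
      rcases hcov v with h'|h'|h'
      · exact absurd (mem_union_left _ h') h
      · exact absurd (mem_union_right _ h') h
      · exact h'
    · intro h hmem
      rcases mem_union.mp hmem with h'|h'
      · exact disjoint_left.mp hUR h' h
      · exact disjoint_left.mp hSR h' h
  refine ⟨⟨Equiv.ofBijective e0 hbij, ?_⟩⟩
  intro v w
  show (stdG n a i).Adj (e0 v) (e0 w) ↔ G.Adj v w
  have hne : e0 v ≠ e0 w ↔ v ≠ w := by
    constructor
    · intro h h'; exact h (by rw [h'])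
    · intro h h'; exact h (he0inj h')
  have hstd : (stdG n a i).Adj (e0 v) (e0 w) ↔
      e0 v ≠ e0 w ∧ ((F v).card < a ∨ (F w).card < a ∨
        (a + i ≤ (F v).card ∧ a + i ≤ (F w).card)) := Iff.rfl
  rw [hstd, hne, hlt_a v, hlt_a w, hR_iff v, hR_iff w, hadj v w]

/-- For `n ≥ 3`, `-1 ≤ ℓ ≤ n-3` and `1 ≤ i ≤ (n-1-ℓ)/2`, the graph
`K_{i+ℓ} + (I_i ∪ K_{n-2i-ℓ})` (here `stdG n a i` with `a = i+ℓ` and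
`c = n-2i-ℓ` remaining clique vertices) is the unique simple graph on `n` vertices
whose nondecreasing degree list is `i+ℓ` (×`i`), `n-i-1` (×`n-2i-ℓ`), `n-1` (×`i+ℓ`):
any graph with that degree multiset is isomorphic to it. -/
theorem stmt0 (n i : ℕ) (ℓ : ℤ) (hn : 3 ≤ n) (hl1 : -1 ≤ ℓ) (hl2 : ℓ ≤ (n : ℤ) - 3)
    (hi1 : 1 ≤ i) (hi2 : (i : ℤ) ≤ ((n : ℤ) - 1 - ℓ) / 2)
    (a c : ℕ) (ha : (a : ℤ) = (i : ℤ) + ℓ) (hc : (c : ℤ) = (n : ℤ) - 2 * (i : ℤ) - ℓ)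
    (G : SimpleGraph (Fin n)) [DecidableRel G.Adj]
    (hdeg : (Finset.univ.val.map fun v => G.degree v) =
      Multiset.replicate i a + Multiset.replicate c (n - i - 1) +
        Multiset.replicate a (n - 1)) :
    Nonempty (G ≃g stdG n a i) := by
  have hsum : a + i + c = n := by omega
  have hc1 : 1 ≤ c := by omega
  set d2 : ℕ := n - i - 1 with hd2
  have hane : a ≠ n - 1 := by omega
  have hd2def : d2 = n - i - 1 := hd2
  have hd2ne : d2 ≠ n - 1 := by omega
  have had2 : a ≤ d2 := by omega
  have hcount : ∀ d : ℕ, (univ.filter fun v => G.degree v = d).card =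
      (if d = a then i else 0) + (if d = d2 then c else 0) +
        (if d = n - 1 then a else 0) := by
    intro d
    rw [← count_filter_card, hdeg]
    simp only [Multiset.count_add, Multiset.count_replicate, eq_comm]
  have hmem : ∀ v : Fin n, G.degree v = a ∨ G.degree v = d2 ∨ G.degree v = n - 1 := by
    intro v
    have hv : G.degree v ∈ (Finset.univ.val.map fun v => G.degree v) :=
      Multiset.mem_map_of_mem _ (Finset.mem_val.mpr (mem_univ v))
    rw [hdeg] at hv
    simp only [Multiset.mem_add, Multiset.mem_replicate] at hv
    tauto
  set U : Finset (Fin n) := univ.filter fun v => G.degree v = n - 1 with hUdef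
  have hUcard : U.card = a := by
    rw [hUdef, hcount]
    have h1 : ¬ (n - 1 = a) := fun h => hane h.symm
    have h2 : ¬ (n - 1 = d2) := fun h => hd2ne h.symm
    simp [h1, h2]
  have hUdeg : ∀ u ∈ U, G.degree u = n - 1 := fun u hu => (mem_filter.mp hu).2
  have hAdjU : ∀ u ∈ U, ∀ w, w ≠ u → G.Adj u w := by
    intro u hu w hw
    have hdu : G.degree u = n - 1 := hUdeg u hu
    have hsub : G.neighborFinset u ⊆ univ.erase u := by
      intro x hx
      exact mem_erase.mpr ⟨((G.mem_neighborFinset u x).mp hx).ne', mem_univ x⟩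
    have hce : (univ.erase u).card = n - 1 := by simp
    have heq : G.neighborFinset u = univ.erase u :=
      Finset.eq_of_subset_of_card_le hsub
        (by rw [hce, G.card_neighborFinset_eq_degree, hdu])
    exact (G.mem_neighborFinset u w).mp (heq ▸ mem_erase.mpr ⟨hw, mem_univ w⟩)
  obtain ⟨S, R, hScard, hRcard, hSdeg, hRdeg, hUS, hUR, hSR, hcov⟩ :
      ∃ S R : Finset (Fin n), S.card = i ∧ R.card = c ∧
        (∀ v ∈ S, G.degree v = a) ∧ (∀ v ∈ R, G.degree v = d2) ∧
        Disjoint U S ∧ Disjoint U R ∧ Disjoint S R ∧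
        (∀ v, v ∈ U ∨ v ∈ S ∨ v ∈ R) := by
    by_cases hcase : a = d2
    · have hc1' : c = 1 := by omega
      set T : Finset (Fin n) := univ.filter fun v => G.degree v = a with hT
      have hTcard : T.card = i + 1 := by
        rw [hT, hcount]
        simp [hane, ← hcase, hc1']
      obtain ⟨t₀, ht₀⟩ : T.Nonempty := card_pos.mp (by omega)
      have hTdeg : ∀ v ∈ T, G.degree v = a := fun v hv => (mem_filter.mp hv).2
      refine ⟨T.erase t₀, {t₀}, ?_, ?_, ?_, ?_, ?_, ?_, ?_, ?_⟩
      · rw [card_erase_of_mem ht₀, hTcard]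
        omega
      · simp [hc1']
      · exact fun v hv => hTdeg v (erase_subset _ _ hv)
      · intro v hv
        rw [mem_singleton.mp hv, ← hcase]
        exact hTdeg t₀ ht₀
      · rw [disjoint_left]
        intro v hv hv'
        have := hTdeg v (erase_subset _ _ hv')
        have := hUdeg v hv
        omega
      · rw [disjoint_left]
        intro v hv hv'
        rw [mem_singleton.mp hv'] at hv
        have := hTdeg t₀ ht₀
        have := hUdeg t₀ hv
        omega
      · simp
      · intro v
        rcases hmem v with h|h|h
        · rcases eq_or_ne v t₀ with h'|h'
          · exact Or.inr (Or.inr (by simp [h']))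
          · exact Or.inr (Or.inl (mem_erase.mpr ⟨h', mem_filter.mpr ⟨mem_univ v, h⟩⟩))
        · rcases eq_or_ne v t₀ with h'|h'
          · exact Or.inr (Or.inr (by simp [h']))
          · exact Or.inr (Or.inl (mem_erase.mpr ⟨h',
              mem_filter.mpr ⟨mem_univ v, by rw [h, hcase]⟩⟩))
        · exact Or.inl (mem_filter.mpr ⟨mem_univ v, h⟩)
    · refine ⟨univ.filter fun v => G.degree v = a, univ.filter fun v => G.degree v = d2,
        ?_, ?_, fun v hv => (mem_filter.mp hv).2, fun v hv => (mem_filter.mp hv).2,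
        ?_, ?_, ?_, ?_⟩
      · rw [hcount]; simp [hane, hcase]
      · rw [hcount]
        have h1 : ¬ (d2 = a) := fun h => hcase h.symm
        simp [h1, hd2ne]
      · rw [disjoint_left]
        intro v hv hv'
        have := hUdeg v hv
        have := (mem_filter.mp hv').2
        omega
      · rw [disjoint_left]
        intro v hv hv'
        have := hUdeg v hv
        have := (mem_filter.mp hv').2
        omega
      · rw [disjoint_left]
        intro v hv hv'
        have := (mem_filter.mp hv).2
        have := (mem_filter.mp hv').2
        omega
      · intro v
        rcases hmem v with h|h|h
        · exact Or.inr (Or.inl (mem_filter.mpr ⟨mem_univ v, h⟩))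
        · exact Or.inr (Or.inr (mem_filter.mpr ⟨mem_univ v, h⟩))
        · exact Or.inl (mem_filter.mpr ⟨mem_univ v, h⟩)
  have hnbrS : ∀ s ∈ S, G.neighborFinset s = U := by
    intro s hs
    have hds : G.degree s = a := hSdeg s hs
    have hsub : U ⊆ G.neighborFinset s := by
      intro u hu
      have hne : s ≠ u := by rintro rfl; exact disjoint_left.mp hUS hu hs
      exact (G.mem_neighborFinset s u).mpr (hAdjU u hu s hne).symm
    exact (Finset.eq_of_subset_of_card_le hsub
      (by rw [G.card_neighborFinset_eq_degree, hds, hUcard])).symm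
  have hAdjR : ∀ r ∈ R, ∀ w, w ≠ r → w ∉ S → G.Adj r w := by
    intro r hr w hwr hwS
    have hdr : G.degree r = d2 := hRdeg r hr
    have hrS : r ∉ S := disjoint_right.mp hSR hr
    have hsub : G.neighborFinset r ⊆ univ \ insert r S := by
      intro x hx
      have hadjx : G.Adj r x := (G.mem_neighborFinset r x).mp hx
      rw [mem_sdiff, mem_insert]
      refine ⟨mem_univ x, ?_⟩
      rintro (rfl | hxS)
      · exact G.loopless.irrefl x hadjx
      · have hrU : r ∈ U := by
          rw [← hnbrS x hxS]
          exact (G.mem_neighborFinset x r).mpr hadjx.symm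
        exact disjoint_left.mp hUR hrU hr
    have hcard : (univ \ insert r S).card = d2 := by
      rw [card_sdiff_of_subset (subset_univ _), card_insert_of_notMem hrS, hScard]
      simp only [card_univ, Fintype.card_fin]
      omega
    have heq : G.neighborFinset r = univ \ insert r S :=
      Finset.eq_of_subset_of_card_le hsub
        (by rw [hcard, G.card_neighborFinset_eq_degree, hdr])
    have hw : w ∈ univ \ insert r S :=
      mem_sdiff.mpr ⟨mem_univ w, by rw [mem_insert]; exact not_or.mpr ⟨hwr, hwS⟩⟩
    exact (G.mem_neighborFinset r w).mp (heq ▸ hw)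
  have hadj' : ∀ v w, G.Adj v w ↔ v ≠ w ∧ (v ∈ U ∨ w ∈ U ∨ (v ∈ R ∧ w ∈ R)) := by
    intro v w
    constructor
    · intro h
      refine ⟨h.ne, ?_⟩
      by_cases hvU : v ∈ U
      · exact Or.inl hvU
      by_cases hwU : w ∈ U
      · exact Or.inr (Or.inl hwU)
      refine Or.inr (Or.inr ⟨?_, ?_⟩)
      · rcases hcov v with h'|h'|h'
        · exact absurd h' hvU
        · exact absurd (by rw [← hnbrS v h']; exact (G.mem_neighborFinset v w).mpr h) hwU
        · exact h'
      · rcases hcov w with h'|h'|h'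
        · exact absurd h' hwU
        · exact absurd (by rw [← hnbrS w h']; exact (G.mem_neighborFinset w v).mpr h.symm) hvU
        · exact h'
    · rintro ⟨hvw, hU'|hU'|⟨hvR, hwR⟩⟩
      · exact hAdjU v hU' w (Ne.symm hvw)
      · exact (hAdjU w hU' v hvw).symm
      · exact hAdjR v hvR w (Ne.symm hvw) (disjoint_right.mp hSR hwR)
  exact aux_iso n a i G U S R hUcard hScard hUS hUR hSR hcov hadj'
end

section
/- Let n, i be positive integers with 1 ≤ i ≤ (n-1)/2. Then the graph K_i + (I_i ∪ K_{n-2i}) on n vertices is not Hamiltonian. -/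
/-- Counting lemma: filtering `Fin n` by a predicate on values equals counting in `range n`. -/
lemma card_filter_val {n : ℕ} (P : ℕ → Prop) [DecidablePred P] :
    (Finset.univ.filter (fun v : Fin n => P (v : ℕ))).card
      = ((Finset.range n).filter P).card := by
  refine Finset.card_bij (fun v _ => (v : ℕ)) ?_ ?_ ?_
  · intro v hv
    simp only [Finset.mem_filter, Finset.mem_univ, true_and] at hv ⊢
    simp [Finset.mem_range, v.isLt, hv]
  · intro v _ w _ h
    exact Fin.val_injective h
  · intro b hb
    simp only [Finset.mem_filter, Finset.mem_range] at hb
    exact ⟨⟨b, hb.1⟩, by simp [hb.2], rfl⟩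

/-- Filtering by a predicate composed with a bijection preserves cardinality. -/
lemma card_filter_comp {α : Type*} [Fintype α] [DecidableEq α] (u : α → α)
    (hu : Function.Bijective u) (P : α → Prop) [DecidablePred P] :
    (Finset.univ.filter (fun j => P (u j))).card = (Finset.univ.filter P).card := by
  refine Finset.card_bij (fun j _ => u j) ?_ ?_ ?_
  · intro j hj
    simp only [Finset.mem_filter, Finset.mem_univ, true_and] at hj ⊢
    exact hj
  · intro v _ w _ h
    exact hu.injective h
  · intro b hb
    simp only [Finset.mem_filter, Finset.mem_univ, true_and] at hb
    obtain ⟨j, rfl⟩ := hu.surjective b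
    exact ⟨j, by simpa using hb, rfl⟩

/-- The graph `K_i + (I_i ∪ K_{n-2i})` on `n` vertices with `1 ≤ i ≤ (n-1)/2`
is not Hamiltonian. -/
theorem stmt1 (n i : ℕ) (hi : 1 ≤ i) (hin : i ≤ (n - 1) / 2) :
    ¬ (stdG n i i).IsHamiltonian := by
  have hn : 2 * i + 1 ≤ n := by omega
  have hn3 : 3 ≤ n := by omega
  haveI : NeZero n := ⟨by omega⟩
  intro hham
  obtain ⟨a, p, hp⟩ := hham (by simp only [Fintype.card_fin]; omega)
  obtain ⟨hcyc, hcount⟩ :=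
    (SimpleGraph.Walk.isHamiltonianCycle_iff_isCycle_and_support_count_tail_eq_one).mp hp
  set L := p.support.tail with hLdef
  have hnodup : L.Nodup := List.nodup_iff_count_le_one.mpr (fun v => (hcount v).le)
  have hmem : ∀ v, v ∈ L := by
    intro v
    have := hcount v
    exact List.count_pos_iff.mp (by rw [this]; exact Nat.one_pos)
  have htofin : L.toFinset = Finset.univ := by
    ext v; simp [hmem v]
  have hlen : L.length = n := by
    have h1 := List.toFinset_card_of_nodup hnodup
    rw [htofin] at h1
    simpa using h1.symm
  set u : Fin n → Fin n := fun j => L.get (Fin.cast hlen.symm j) with hu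
  have hu_inj : Function.Injective u := by
    intro j k h
    have := (List.nodup_iff_injective_get.mp hnodup) h
    exact Fin.ext (by simpa using congrArg Fin.val this)
  have hu_bij : Function.Bijective u := Finite.injective_iff_bijective.mp hu_inj
  have hsup : p.support = a :: L := p.support_eq_cons
  have hchain0 := p.isChain_adj_support
  rw [hsup] at hchain0
  have hchain := List.isChain_iff_getElem.mp hchain0
  -- chain facts on L
  have hstep : ∀ (k : ℕ) (h : k + 1 < n), (stdG n i i).Adj (L.get ⟨k, by omega⟩) (L.get ⟨k + 1, by omega⟩) := by
    intro k h
    have := hchain (k + 1) (by simp [hlen]; omega)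
    simpa using this
  have hfirst : (stdG n i i).Adj a (L.get ⟨0, by omega⟩) := by
    have := hchain 0 (by simp [hlen]; omega)
    simpa using this
  have hLne : L ≠ [] := by
    intro h; rw [h] at hlen; simp at hlen; omega
  have hlast : L.get ⟨n - 1, by rw [hlen]; omega⟩ = a := by
    have h1 : p.support.getLast? = some a := by
      rw [List.getLast?_eq_getLast_of_ne_nil (by simp), p.getLast_support]
    rw [hsup, List.getLast?_eq_getLast_of_ne_nil (List.cons_ne_nil a L)] at h1
    have h2 : (a :: L).getLast (List.cons_ne_nil a L) = a := Option.some_injective _ h1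
    rw [List.getLast_cons hLne, List.getLast_eq_getElem] at h2
    refine Eq.trans ?_ h2
    simp only [List.get_eq_getElem]
    congr 1
    omega
  have hadj : ∀ j : Fin n, (stdG n i i).Adj (u j) (u (j + 1)) := by
    intro j
    rcases lt_or_ge ((j : ℕ) + 1) n with h | h
    · have hval : ((j + 1 : Fin n) : ℕ) = (j : ℕ) + 1 := by
        rw [Fin.add_def]
        simp only [Fin.val_one', Nat.mod_eq_of_lt (show 1 < n by omega)]
        exact Nat.mod_eq_of_lt h
      have h2 := hstep (j : ℕ) h
      have e1 : u j = L.get ⟨(j : ℕ), by rw [hlen]; exact j.isLt⟩ := by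
        simp only [hu]; congr 1
      have e2 : u (j + 1) = L.get ⟨(j : ℕ) + 1, by rw [hlen]; exact h⟩ := by
        simp only [hu]; congr 1; exact Fin.ext (by simp [hval])
      rw [e1, e2]; exact h2
    · have hj : (j : ℕ) = n - 1 := by have := j.isLt; omega
      have hval : ((j + 1 : Fin n) : ℕ) = 0 := by
        rw [Fin.add_def]
        simp only [Fin.val_one', Nat.mod_eq_of_lt (show 1 < n by omega), hj]
        have : n - 1 + 1 = n := by omega
        rw [this, Nat.mod_self]
      have e1 : u j = a := by
        rw [← hlast]
        simp only [hu]; congr 1; exact Fin.ext (by simp [hj])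
      have e2 : u (j + 1) = L.get ⟨0, by rw [hlen]; omega⟩ := by
        simp only [hu]; congr 1; exact Fin.ext (by simp [hval])
      rw [e1, e2]; exact hfirst
  -- the index sets
  classical
  set IA : Finset (Fin n) := Finset.univ.filter (fun j => ((u j : ℕ) < i)) with hIA
  set II : Finset (Fin n) :=
    Finset.univ.filter (fun j => (i ≤ (u j : ℕ) ∧ (u j : ℕ) < 2 * i)) with hII
  have hcardIA : IA.card = i := by
    rw [hIA, card_filter_comp u hu_bij (fun v => (v : ℕ) < i), card_filter_val (fun x => x < i)]
    have : (Finset.range n).filter (fun x => x < i) = Finset.range i := by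
      ext x; simp [Finset.mem_range]; omega
    rw [this, Finset.card_range]
  have hcardII : II.card = i := by
    rw [hII, card_filter_comp u hu_bij (fun v => i ≤ (v : ℕ) ∧ (v : ℕ) < 2 * i),
      card_filter_val (fun x => i ≤ x ∧ x < 2 * i)]
    have : (Finset.range n).filter (fun x => i ≤ x ∧ x < 2 * i) = Finset.Ico i (2 * i) := by
      ext x; simp [Finset.mem_range, Finset.mem_Ico]; omega
    rw [this, Nat.card_Ico]
    omega
  -- neighbors of independent vertices lie in A
  have hInbr : ∀ v w : Fin n, (stdG n i i).Adj v w → i ≤ (v : ℕ) → (v : ℕ) < 2 * i → (w : ℕ) < i := by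
    intro v w hvw h1 h2
    obtain ⟨-, h⟩ := hvw
    omega
  have hsucc : ∀ j ∈ II, j + 1 ∈ IA := by
    intro j hj
    simp only [hII, Finset.mem_filter, Finset.mem_univ, true_and] at hj
    simp only [hIA, Finset.mem_filter, Finset.mem_univ, true_and]
    exact hInbr _ _ (hadj j) hj.1 hj.2
  have hpred : ∀ j ∈ II, j - 1 ∈ IA := by
    intro j hj
    simp only [hII, Finset.mem_filter, Finset.mem_univ, true_and] at hj
    simp only [hIA, Finset.mem_filter, Finset.mem_univ, true_and]
    have := hadj (j - 1)
    rw [sub_add_cancel] at this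
    exact hInbr _ _ this.symm hj.1 hj.2
  -- surjectivity of successor II → IA
  have hsurj2 := Finset.surj_on_of_inj_on_of_card_le (s := II) (t := IA)
    (fun j _ => j - 1) (fun j hj => hpred j hj)
    (fun j k hj hk h => by
      have h' : j - 1 = k - 1 := h
      have : j - 1 + 1 = k - 1 + 1 := by rw [h']
      simpa [sub_add_cancel] using this)
    (by rw [hcardIA, hcardII])
  -- closure of IA ∪ II under successor
  have hclosed : ∀ j, j ∈ IA ∪ II → j + 1 ∈ IA ∪ II := by
    intro j hj
    rcases Finset.mem_union.mp hj with h | h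
    · obtain ⟨k, hk, hjk⟩ := hsurj2 j h
      have hjk' : j = k - 1 := hjk
      have : j + 1 = k := by rw [hjk', sub_add_cancel]
      rw [this]
      exact Finset.mem_union_right _ hk
    · exact Finset.mem_union_left _ (hsucc j h)
  -- II is nonempty
  obtain ⟨j₀, hj₀⟩ := Finset.card_pos.mp (by rw [hcardII]; omega)
  letI : NatCast (Fin n) := Fin.NatCast.instNatCast n
  have horbit : ∀ k : ℕ, j₀ + (k : Fin n) ∈ IA ∪ II := by
    intro k
    induction k with
    | zero => simpa using Finset.mem_union_right _ hj₀
    | succ m ih =>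
        have : ((m + 1 : ℕ) : Fin n) = (m : ℕ) + 1 := Fin.ext (by simp [Fin.NatCast.instNatCast, Fin.val_add, Fin.ofNat, Nat.add_mod])
        rw [this, ← add_assoc]
        exact hclosed _ ih
  -- all indices are in IA ∪ II
  have hall : ∀ j : Fin n, j ∈ IA ∪ II := by
    intro j
    have := horbit ((j - j₀ : Fin n) : ℕ)
    rwa [Fin.cast_val_eq_self, add_sub_cancel] at this
  -- but some vertex has value ≥ 2i
  obtain ⟨j, hj⟩ := hu_bij.surjective ⟨2 * i, by omega⟩
  have := hall j
  rcases Finset.mem_union.mp this with h | h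
  · simp only [hIA, Finset.mem_filter, Finset.mem_univ, true_and, hj] at h
    omega
  · simp only [hII, Finset.mem_filter, Finset.mem_univ, true_and, hj] at h
    omega
end

section
/- Let n, i be integers with 1 ≤ i ≤ n/2. Then the graph K_{i-1} + (I_i ∪ K_{n-2i+1}) on n vertices is not traceable (contains no Hamilton path). -/
/-- Weight function: `+1` on the clique-join part, `-1` on the independent set, `0` else. -/
def gfun (a b v : ℕ) : ℤ := if v < a then 1 else if v < a + b then -1 else 0

/-- Key counting invariant along any adjacency chain in `stdG n a b`. -/
lemma key (n a b : ℕ) :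
    ∀ (T : List (Fin n)) (x : Fin n), (x :: T).Chain' (stdG n a b).Adj →
        ((x:ℕ) < a → 0 ≤ ((x :: T).map (fun v : Fin n => gfun a b (v:ℕ))).sum ∧
          (((x :: T).map (fun v : Fin n => gfun a b (v:ℕ))).sum = 0 →
            ∀ y ∈ (x :: T), (y:ℕ) < a+b)) ∧
        (a ≤ (x:ℕ) → (x:ℕ) < a+b → -1 ≤ ((x :: T).map (fun v : Fin n => gfun a b (v:ℕ))).sum ∧
          (((x :: T).map (fun v : Fin n => gfun a b (v:ℕ))).sum = -1 →
            ∀ y ∈ (x :: T), (y:ℕ) < a+b)) ∧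
        (a+b ≤ (x:ℕ) → 0 ≤ ((x :: T).map (fun v : Fin n => gfun a b (v:ℕ))).sum) := by
  intro T
  induction T with
  | nil =>
    intro x _
    simp only [List.map_cons, List.map_nil, List.sum_cons, List.sum_nil, add_zero]
    unfold gfun
    refine ⟨?_, ?_, ?_⟩
    · intro h; rw [if_pos h]
      exact ⟨by norm_num, by intro h0; omega⟩
    · intro h1 h2; rw [if_neg (by omega), if_pos h2]
      refine ⟨le_refl _, ?_⟩
      intro _ y hy; simp at hy; subst hy; exact h2
    · intro h; rw [if_neg (by omega), if_neg (by omega)]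
  | cons y T'' ih =>
    intro x hc
    have hadj : (stdG n a b).Adj x y := (List.isChain_cons_cons.mp hc).1
    have hc' : (y :: T'').Chain' (stdG n a b).Adj := (List.isChain_cons_cons.mp hc).2
    obtain ⟨IHA, IHB, IHC⟩ := ih y hc'
    obtain ⟨hne, hcase⟩ := hadj
    set S : ℤ := ((y :: T'').map (fun v : Fin n => gfun a b (v:ℕ))).sum with hS
    have hsum : ((x :: y :: T'').map (fun v : Fin n => gfun a b (v:ℕ))).sum
        = gfun a b (x:ℕ) + S := by simp [hS]
    refine ⟨?_, ?_, ?_⟩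
    · -- x ∈ A
      intro hxA
      have hgx : gfun a b (x:ℕ) = 1 := if_pos hxA
      rw [hsum, hgx]
      by_cases hyA : (y:ℕ) < a
      · obtain ⟨h1, _⟩ := IHA hyA
        exact ⟨by omega, by omega⟩
      · by_cases hyB : (y:ℕ) < a + b
        · obtain ⟨h1, h2⟩ := IHB (by omega) hyB
          refine ⟨by omega, ?_⟩
          intro h0 z hz
          rcases List.mem_cons.mp hz with rfl | hz
          · omega
          · exact h2 (by omega) z hz
        · have h1 := IHC (by omega)
          exact ⟨by omega, by omega⟩
    · -- x ∈ B
      intro hx1 hx2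
      have hyA : (y:ℕ) < a := by
        rcases hcase with h | h | h
        · omega
        · exact h
        · omega
      have hgx : gfun a b (x:ℕ) = -1 := by
        unfold gfun; rw [if_neg (by omega), if_pos hx2]
      rw [hsum, hgx]
      obtain ⟨h1, h2⟩ := IHA hyA
      refine ⟨by omega, ?_⟩
      intro h0 z hz
      rcases List.mem_cons.mp hz with rfl | hz
      · omega
      · exact h2 (by omega) z hz
    · -- x ∈ C
      intro hx
      have hgx : gfun a b (x:ℕ) = 0 := by
        unfold gfun; rw [if_neg (by omega), if_neg (by omega)]
      rw [hsum, hgx]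
      rcases hcase with h | h | h
      · omega
      · have := (IHA h).1; omega
      · have := IHC h.2; omega

/-- The total weight over all of `Fin n`. -/
lemma total (n a b : ℕ) (h : a + b ≤ n) :
    ∑ v : Fin n, gfun a b (v:ℕ) = (a:ℤ) - b := by
  rw [Fin.sum_univ_eq_sum_range (fun j => gfun a b j) n]
  rw [← Finset.sum_subset (Finset.range_subset_range.mpr h)
    (by intro x hx hnx
        simp only [Finset.mem_range] at hx hnx
        unfold gfun
        rw [if_neg (by omega), if_neg (by omega)])]
  rw [Finset.range_eq_Ico, ← Finset.sum_Ico_consecutive _ (Nat.zero_le a) (Nat.le_add_right a b)]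
  have h1 : ∑ j ∈ Finset.Ico 0 a, gfun a b j = (a:ℤ) := by
    rw [Finset.sum_congr rfl (fun x hx => show gfun a b x = 1 from
      if_pos (Finset.mem_Ico.mp hx).2)]
    simp
  have h2 : ∑ j ∈ Finset.Ico a (a+b), gfun a b j = -(b:ℤ) := by
    rw [Finset.sum_congr rfl (fun x hx => show gfun a b x = -1 by
      obtain ⟨hx1, hx2⟩ := Finset.mem_Ico.mp hx
      unfold gfun; rw [if_neg (by omega), if_pos hx2])]
    simp
  rw [h1, h2]; ring

/-- The graph `K_{i-1} + (I_i ∪ K_{n-2i+1})` on `n` vertices with `1 ≤ i ≤ n/2`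
is not traceable: it contains no Hamilton path. -/
theorem stmt2 (n i : ℕ) (hi : 1 ≤ i) (hin : i ≤ n / 2) :
    ¬ ∃ (u v : Fin n) (p : (stdG n (i - 1) i).Walk u v), p.IsHamiltonian := by
  rintro ⟨u, v, p, hp⟩
  have hn : 2 * i ≤ n := by
    have := Nat.div_mul_le_self n 2
    omega
  have hab : (i - 1) + i ≤ n := by omega
  have hnodup : p.support.Nodup :=
    List.nodup_iff_count_le_one.mpr (fun x => (hp x).le)
  have hmem : ∀ x : Fin n, x ∈ p.support := by
    intro x
    by_contra h
    have := hp x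
    rw [List.count_eq_zero_of_not_mem h] at this
    simp at this
  have hsum : (p.support.map (fun v : Fin n => gfun (i - 1) i (v:ℕ))).sum = -1 := by
    have huniv : p.support.toFinset = Finset.univ :=
      Finset.eq_univ_iff_forall.mpr (fun x => List.mem_toFinset.mpr (hmem x))
    have hs := List.sum_toFinset (fun v : Fin n => gfun (i - 1) i (v:ℕ)) hnodup
    rw [huniv] at hs
    rw [← hs, total n (i - 1) i hab]
    omega
  have hc : (u :: p.support.tail).Chain' (stdG n (i - 1) i).Adj := by
    rw [← p.support_eq_cons]; exact p.isChain_adj_support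
  obtain ⟨KA, KB, KC⟩ := key n (i - 1) i p.support.tail u hc
  rw [← p.support_eq_cons] at KA KB KC
  by_cases h1 : (u:ℕ) < i - 1
  · have := (KA h1).1; omega
  · by_cases h2 : (u:ℕ) < (i - 1) + i
    · have hnoC := (KB (by omega) h2).2 hsum
      have hcx : (i - 1) + i < n := by omega
      have := hnoC ⟨(i - 1) + i, hcx⟩ (hmem _)
      simp at this
    · have := KC (by omega); omega
end

section
/- Let n, i be integers with 1 ≤ i ≤ (n-2)/2. Then the graph K_{i+1} + (I_i ∪ K_{n-2i-1}) on n vertices is not Hamiltonian-connected: there exist two distinct vertices with no Hamilton path between them. -/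
lemma getVert_support_get {V : Type*} {G : SimpleGraph V} {u v : V} (p : G.Walk u v)
    (k : ℕ) (h : k < p.support.length) : p.support.get ⟨k, h⟩ = p.getVert k := by
  induction p generalizing k with
  | nil =>
    cases k with
    | zero => rfl
    | succ k => simp [SimpleGraph.Walk.support_nil] at h
  | cons h' q ih =>
    cases k with
    | zero => rfl
    | succ k =>
      simp only [SimpleGraph.Walk.support_cons, SimpleGraph.Walk.getVert_cons_succ]
      exact ih k _

lemma card_filter_val_lt (n c : ℕ) (hc : c ≤ n) :
    (Finset.univ.filter (fun x : Fin n => (x : ℕ) < c)).card = c := by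
  calc (Finset.univ.filter (fun x : Fin n => (x : ℕ) < c)).card
      = (Finset.range c).card := by
        refine Finset.card_bij (fun x _ => (x : ℕ)) ?_ ?_ ?_
        · intro x hx; simp only [Finset.mem_filter] at hx; simp [hx.2]
        · intro x hx y hy hxy; exact Fin.val_injective hxy
        · intro b hb
          simp only [Finset.mem_range] at hb
          exact ⟨⟨b, lt_of_lt_of_le hb hc⟩, by simp [hb], rfl⟩
    _ = c := Finset.card_range c

lemma card_filter_val_Ico (n c d : ℕ) (hd : d ≤ n) :
    (Finset.univ.filter (fun x : Fin n => c ≤ (x : ℕ) ∧ (x : ℕ) < d)).card = d - c := by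
  calc (Finset.univ.filter (fun x : Fin n => c ≤ (x : ℕ) ∧ (x : ℕ) < d)).card
      = (Finset.Ico c d).card := by
        refine Finset.card_bij (fun x _ => (x : ℕ)) ?_ ?_ ?_
        · intro x hx; simp only [Finset.mem_filter] at hx; simp [Finset.mem_Ico, hx.2]
        · intro x hx y hy hxy; exact Fin.val_injective hxy
        · intro b hb
          simp only [Finset.mem_Ico] at hb
          exact ⟨⟨b, lt_of_lt_of_le hb.2 hd⟩, by simp [hb.1, hb.2], rfl⟩
    _ = d - c := Nat.card_Ico c d

/-- The graph `K_{i+1} + (I_i ∪ K_{n-2i-1})` on `n` vertices with `1 ≤ i ≤ (n-2)/2`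
is not Hamiltonian-connected: there are two distinct vertices with no Hamilton path
between them. -/
theorem stmt3 (n i : ℕ) (hi : 1 ≤ i) (hin : i ≤ (n - 2) / 2) :
    ∃ u v : Fin n, u ≠ v ∧
      ¬ ∃ p : (stdG n (i + 1) i).Walk u v, p.IsHamiltonian := by
  have hn : 2 * i + 2 ≤ n := by omega
  set u : Fin n := ⟨0, by omega⟩ with hu
  set v : Fin n := ⟨1, by omega⟩ with hv
  have hu0 : (u : ℕ) = 0 := rfl
  have hv1 : (v : ℕ) = 1 := rfl
  set G := stdG n (i + 1) i with hG
  refine ⟨u, v, by rw [hu, hv]; simp [Fin.ext_iff], ?_⟩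
  rintro ⟨p, hp⟩
  set L := p.support with hL
  set m := p.length with hm
  have hnodup : L.Nodup := hp.isPath.support_nodup
  have hlen : L.length = m + 1 := p.length_support
  have hmn : m + 1 = n := by
    have h1 : L.toFinset.card = L.length := List.toFinset_card_of_nodup hnodup
    have h2 := hp.support_toFinset
    rw [← hL] at h2
    rw [h2] at h1
    simp only [Finset.card_univ, Fintype.card_fin] at h1
    omega
  -- injectivity of getVert on [0, m]
  have inj : ∀ j k : ℕ, j ≤ m → k ≤ m → p.getVert j = p.getVert k → j = k := by
    intro j k hj hk h
    have hj' : j < L.length := by omega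
    have hk' : k < L.length := by omega
    have hget : L.get ⟨j, hj'⟩ = L.get ⟨k, hk'⟩ := by
      rw [getVert_support_get p j hj', getVert_support_get p k hk']; exact h
    have := (List.Nodup.get_inj_iff hnodup).mp hget
    simpa using congrArg Fin.val this
  -- the position function
  have hK : ∀ x : Fin n, p.getVert (L.idxOf x) = x := by
    intro x
    have hx : x ∈ L := hp.mem_support x
    have hlt : L.idxOf x < L.length := List.idxOf_lt_length_iff.2 hx
    rw [← getVert_support_get p _ (by rw [← hL]; exact hlt)]
    exact List.getElem_idxOf hlt
  have hKle : ∀ x : Fin n, L.idxOf x ≤ m := by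
    intro x
    have hx : x ∈ L := hp.mem_support x
    have := List.idxOf_lt_length_iff.2 hx
    omega
  have hgv0 : p.getVert 0 = u := p.getVert_zero
  have hgvm : p.getVert m = v := p.getVert_length
  -- sets
  set I' : Finset (Fin n) :=
    Finset.univ.filter (fun x => i + 1 ≤ (x : ℕ) ∧ (x : ℕ) < 2 * i + 1) with hI'
  set A' : Finset (Fin n) :=
    Finset.univ.filter (fun x => (x : ℕ) < i + 1 ∧ x ≠ v) with hA'
  have cardI : I'.card = i := by
    rw [hI', card_filter_val_Ico n (i+1) (2*i+1) (by omega)]; omega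
  have cardA : A'.card = i := by
    have h1 : A' = (Finset.univ.filter (fun x : Fin n => (x : ℕ) < i + 1)).erase v := by
      ext x
      simp only [hA', Finset.mem_erase, Finset.mem_filter, Finset.mem_univ, true_and]
      tauto
    rw [h1, Finset.card_erase_of_mem (by simp; omega),
      card_filter_val_lt n (i+1) (by omega)]
    omega
  -- membership in I' means indexOf is strictly between 0 and m
  have hKpos : ∀ x ∈ I', 1 ≤ L.idxOf x ∧ L.idxOf x < m := by
    intro x hx
    simp only [hI', Finset.mem_filter, Finset.mem_univ, true_and] at hx
    constructor
    · rcases Nat.eq_zero_or_pos (L.idxOf x) with h0 | h0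
      · exfalso
        have h1 := hK x
        rw [h0, hgv0] at h1
        have : (u : ℕ) = (x : ℕ) := congrArg Fin.val h1
        omega
      · exact h0
    · rcases lt_or_eq_of_le (hKle x) with h0 | h0
      · exact h0
      · exfalso
        have h1 := hK x
        rw [h0, hgvm] at h1
        have : (v : ℕ) = (x : ℕ) := congrArg Fin.val h1
        omega
  -- the predecessor map lands in A'
  have hf_mem : ∀ x ∈ I', p.getVert (L.idxOf x - 1) ∈ A' := by
    intro x hx
    obtain ⟨h1, h2⟩ := hKpos x hx
    simp only [hI', Finset.mem_filter, Finset.mem_univ, true_and] at hx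
    have hadj : G.Adj (p.getVert (L.idxOf x - 1)) (p.getVert (L.idxOf x)) := by
      have := p.adj_getVert_succ (i := L.idxOf x - 1) (by omega)
      rwa [show L.idxOf x - 1 + 1 = L.idxOf x by omega] at this
    rw [hK x] at hadj
    obtain ⟨hne, hcase⟩ := hadj
    simp only [hA', Finset.mem_filter, Finset.mem_univ, true_and]
    constructor
    · rcases hcase with h | h | h
      · exact h
      · omega
      · omega
    · intro hveq
      have := inj (L.idxOf x - 1) m (by omega) le_rfl (by rw [hveq, hgvm])
      omega
  have hf_inj : ∀ x₁ ∈ I', ∀ x₂ ∈ I',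
      p.getVert (L.idxOf x₁ - 1) = p.getVert (L.idxOf x₂ - 1) → x₁ = x₂ := by
    intro x₁ hx₁ x₂ hx₂ h
    obtain ⟨h1, h2⟩ := hKpos x₁ hx₁
    obtain ⟨h3, h4⟩ := hKpos x₂ hx₂
    have h5 := inj _ _ (by omega) (by omega) h
    have h6 : L.idxOf x₁ = L.idxOf x₂ := by omega
    rw [← hK x₁, ← hK x₂, h6]
  -- the first vertex of the big clique part
  set S : Finset ℕ :=
    (Finset.range (m + 1)).filter (fun k => 2 * i + 1 ≤ (p.getVert k : ℕ)) with hS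
  have hSne : S.Nonempty := by
    refine ⟨L.idxOf ⟨2 * i + 1, by omega⟩, ?_⟩
    simp only [hS, Finset.mem_filter, Finset.mem_range]
    refine ⟨by have := hKle ⟨2 * i + 1, by omega⟩; omega, ?_⟩
    rw [hK]
  set k := S.min' hSne with hk
  have hkS : k ∈ S := S.min'_mem hSne
  have hkprop : k ≤ m ∧ 2 * i + 1 ≤ (p.getVert k : ℕ) := by
    have h1 := hkS
    simp only [hS, Finset.mem_filter, Finset.mem_range] at h1
    omega
  have hk0 : 1 ≤ k := by
    rcases Nat.eq_zero_or_pos k with h0 | h0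
    · exfalso
      have h1 := hkprop.2
      rw [h0, hgv0] at h1
      omega
    · exact h0
  have hkm : k < m := by
    rcases lt_or_eq_of_le hkprop.1 with h0 | h0
    · exact h0
    · exfalso
      have h1 := hkprop.2
      rw [h0, hgvm] at h1
      omega
  -- its predecessor w
  have hw_notbig : (p.getVert (k - 1) : ℕ) < 2 * i + 1 := by
    by_contra h
    push_neg at h
    have h1 : k - 1 ∈ S := by
      simp only [hS, Finset.mem_filter, Finset.mem_range]
      exact ⟨by omega, h⟩
    have := S.min'_le _ h1
    omega
  have hw_mem : p.getVert (k - 1) ∈ A' := by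
    have hadj : G.Adj (p.getVert (k - 1)) (p.getVert k) := by
      have := p.adj_getVert_succ (i := k - 1) (by omega)
      rwa [show k - 1 + 1 = k by omega] at this
    obtain ⟨hne, hcase⟩ := hadj
    simp only [hA', Finset.mem_filter, Finset.mem_univ, true_and]
    constructor
    · rcases hcase with h | h | h
      · exact h
      · omega
      · omega
    · intro hveq
      have := inj (k - 1) m (by omega) le_rfl (by rw [hveq, hgvm])
      omega
  -- surjectivity: w is the predecessor of some x ∈ I'
  obtain ⟨x, hx, hxw⟩ := Finset.surj_on_of_inj_on_of_card_le
    (fun x _ => p.getVert (L.idxOf x - 1)) hf_mem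
    (fun x₁ x₂ h₁ h₂ => hf_inj x₁ h₁ x₂ h₂) (by omega) _ hw_mem
  obtain ⟨h1, h2⟩ := hKpos x hx
  have h3 : L.idxOf x - 1 = k - 1 := inj _ _ (by omega) (by omega) hxw.symm
  have hKx : L.idxOf x = k := by omega
  have h4 : x = p.getVert k := by rw [← hK x, hKx]
  simp only [hI', Finset.mem_filter, Finset.mem_univ, true_and] at hx
  have h5 := hkprop.2
  have h6 : (x : ℕ) = (p.getVert k : ℕ) := congrArg Fin.val h4
  omega
end

section
/- Let n, k, i be integers with 0 ≤ k ≤ n-3 and 1 ≤ i ≤ (n-1-k)/2. Then the graph K_{i+k} + (I_i ∪ K_{n-2i-k}) on n vertices is not k-Hamiltonian: there is a set S of k vertices such that G - S is not Hamiltonian. -/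
open SimpleGraph

lemma adj_formPerm_of_isCycle {V : Type*} [DecidableEq V] {G : SimpleGraph V} {v x : V}
    {p : G.Walk v v} (hp : p.IsCycle) (hx : x ∈ p.support) :
    G.Adj x (p.support.tail.formPerm x) := by
  have hq : (p.rotate x hx).IsCycle := hp.rotate hx
  have hperm : (p.rotate x hx).support.tail.formPerm = p.support.tail.formPerm :=
    List.formPerm_eq_of_isRotated hq.support_nodup (p.support_rotate x hx)
  rw [← hperm]
  set q := p.rotate x hx with hq_def
  have hnil : ¬ q.Nil := hq.not_nil
  have hadj : G.Adj x q.snd := Walk.adj_snd hnil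
  have hsup : q.support.tail = q.tail.support := (Walk.support_tail_of_not_nil q hnil).symm
  rw [hsup]
  obtain ⟨ys, hys⟩ : ∃ ys, q.tail.support = ys ++ [x] := by
    refine ⟨q.tail.support.dropLast, ?_⟩
    conv_lhs => rw [← List.dropLast_append_getLast (l := q.tail.support) (by simp)]
    rw [Walk.getLast_support]
  have hcons := Walk.support_eq_cons q.tail
  rw [hys] at hcons
  cases ys with
  | nil =>
    exfalso
    simp only [List.nil_append, List.cons.injEq] at hcons
    rw [← hcons.1] at hadj
    exact G.irrefl hadj
  | cons a ys' =>
    simp only [List.cons_append, List.cons.injEq] at hcons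
    rw [hys, List.cons_append, List.formPerm_cons_concat_apply_last a x ys', hcons.1]
    exact hadj



/-- The graph `K_{i+k} + (I_i ∪ K_{n-2i-k})` on `n` vertices, with `0 ≤ k ≤ n-3` and
`1 ≤ i ≤ (n-1-k)/2`, is not `k`-Hamiltonian: there is a set `S` of `k` vertices whose
deletion leaves a non-Hamiltonian graph. -/
theorem stmt4 (n k i : ℕ) (hk : k ≤ n - 3) (hi : 1 ≤ i) (hin : i ≤ (n - 1 - k) / 2) :
    ∃ S : Finset (Fin n), S.card = k ∧
      ¬ ((stdG n (i + k) i).induce {v | v ∉ S}).IsHamiltonian := by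
  have h2i : i * 2 ≤ n - 1 - k := (Nat.le_div_iff_mul_le (by norm_num)).mp hin
  have hn : 2 * i + k + 1 ≤ n := by omega
  have hIco : ∀ m ∈ Finset.Ico i (i + k), m < n := by
    intro m hm
    have := Finset.mem_Ico.mp hm
    omega
  refine ⟨(Finset.Ico i (i + k)).attachFin hIco,
    by rw [Finset.card_attachFin, Nat.card_Ico]; omega, ?_⟩
  set S : Finset (Fin n) := (Finset.Ico i (i + k)).attachFin hIco with hS_def
  have hmemS : ∀ v : Fin n, v ∈ S ↔ i ≤ (v : ℕ) ∧ (v : ℕ) < i + k := by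
    intro v
    rw [hS_def, Finset.mem_attachFin, Finset.mem_Ico]
  intro hham
  -- two designated vertices
  have hu_lt : i + k < n := by omega
  have hc_lt : i + k + i < n := by omega
  have huS : (⟨i + k, hu_lt⟩ : Fin n) ∈ {v : Fin n | v ∉ S} := by
    simp only [Set.mem_setOf_eq, hmemS]; omega
  have hcS : (⟨i + k + i, hc_lt⟩ : Fin n) ∈ {v : Fin n | v ∉ S} := by
    simp only [Set.mem_setOf_eq, hmemS]; omega
  set u : ↥{v : Fin n | v ∉ S} := ⟨⟨i + k, hu_lt⟩, huS⟩ with hu_def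
  set c : ↥{v : Fin n | v ∉ S} := ⟨⟨i + k + i, hc_lt⟩, hcS⟩ with hc_def
  have hu_val : ((u : Fin n) : ℕ) = i + k := rfl
  have hc_val : ((c : Fin n) : ℕ) = i + k + i := rfl
  have hune : u ≠ c := by
    intro h
    have h2 : ((u : Fin n) : ℕ) = ((c : Fin n) : ℕ) := by rw [h]
    rw [hu_val, hc_val] at h2
    omega
  obtain ⟨v0, p, hp⟩ := hham (Fintype.one_lt_card_iff.mpr ⟨u, c, hune⟩).ne'
  set s : List ↥{v : Fin n | v ∉ S} := p.support.tail with hs_def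
  set σ : Equiv.Perm ↥{v : Fin n | v ∉ S} := s.formPerm with hσ_def
  have hnodup : s.Nodup := hp.isCycle.support_nodup
  have hall : ∀ x : ↥{v : Fin n | v ∉ S}, x ∈ s := by
    intro x
    have h1 := hp.isHamiltonian_tail x
    rw [Walk.support_tail_of_not_nil _ hp.isCycle.not_nil] at h1
    refine List.count_pos_iff.mp ?_
    rw [hs_def]
    exact lt_of_lt_of_eq Nat.one_pos (by convert h1.symm)
  have hadjσ : ∀ x : ↥{v : Fin n | v ∉ S},
      ((stdG n (i + k) i).induce {v | v ∉ S}).Adj x (σ x) :=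
    fun x => adj_formPerm_of_isCycle hp.isCycle (hp.mem_support x)
  have hadjinv : ∀ x : ↥{v : Fin n | v ∉ S},
      ((stdG n (i + k) i).induce {v | v ∉ S}).Adj (σ⁻¹ x) x := by
    intro x
    have := hadjσ (σ⁻¹ x)
    rwa [show σ (σ⁻¹ x) = x from σ.apply_symm_apply x] at this
  have adj_iff : ∀ x y : ↥{v : Fin n | v ∉ S},
      ((stdG n (i + k) i).induce {v | v ∉ S}).Adj x y ↔ ((x : Fin n) ≠ (y : Fin n) ∧
      (((x : Fin n) : ℕ) < i + k ∨ ((y : Fin n) : ℕ) < i + k ∨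
        ((i + k) + i ≤ ((x : Fin n) : ℕ) ∧ (i + k) + i ≤ ((y : Fin n) : ℕ)))) :=
    fun x y => Iff.rfl
  have hnotS : ∀ x : ↥{v : Fin n | v ∉ S},
      ((x : Fin n) : ℕ) < i ∨ i + k ≤ ((x : Fin n) : ℕ) := by
    intro x
    have hx := x.2
    simp only [Set.mem_setOf_eq, hmemS] at hx
    omega
  classical
  set Jf : Finset ↥{v : Fin n | v ∉ S} :=
    Finset.univ.filter (fun x => ((x : Fin n) : ℕ) < i) with hJf_def
  set If' : Finset ↥{v : Fin n | v ∉ S} := Finset.univ.filter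
    (fun x => i + k ≤ ((x : Fin n) : ℕ) ∧ ((x : Fin n) : ℕ) < i + k + i) with hIf_def
  have hmemJ : ∀ x : ↥{v : Fin n | v ∉ S}, x ∈ Jf ↔ ((x : Fin n) : ℕ) < i := by
    intro x; rw [hJf_def, Finset.mem_filter]; simp
  have hmemI : ∀ x : ↥{v : Fin n | v ∉ S}, x ∈ If' ↔
      i + k ≤ ((x : Fin n) : ℕ) ∧ ((x : Fin n) : ℕ) < i + k + i := by
    intro x; rw [hIf_def, Finset.mem_filter]; simp
  -- independent vertices map into J under σ and σ⁻¹
  have hIJ : ∀ x ∈ If', σ x ∈ Jf := by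
    intro x hx
    rw [hmemI] at hx
    have h1 := ((adj_iff x (σ x)).mp (hadjσ x)).2
    have h2 := hnotS (σ x)
    rw [hmemJ]
    omega
  have hIJ' : ∀ x ∈ If', σ⁻¹ x ∈ Jf := by
    intro x hx
    rw [hmemI] at hx
    have h1 := ((adj_iff (σ⁻¹ x) x).mp (hadjinv x)).2
    have h2 := hnotS (σ⁻¹ x)
    rw [hmemJ]
    omega
  -- |J| ≤ |I|
  have hcardle : Jf.card ≤ If'.card := by
    refine Finset.card_le_card_of_injOn (fun x =>
      if h : ((x : Fin n) : ℕ) < i then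
        ⟨⟨((x : Fin n) : ℕ) + (i + k), by omega⟩, by
          simp only [Set.mem_setOf_eq, hmemS, Fin.val_mk]; omega⟩
      else x) ?_ ?_
    · intro x hx
      rw [Finset.mem_coe, hmemJ] at hx
      simp only [dif_pos hx]
      rw [Finset.mem_coe, hmemI]
      exact ⟨(by omega : i + k ≤ ((x : Fin n) : ℕ) + (i + k)),
        (by omega : ((x : Fin n) : ℕ) + (i + k) < i + k + i)⟩
    · intro x hx y hy hxy
      simp only [Finset.mem_coe, hmemJ] at hx hy
      simp only [dif_pos hx, dif_pos hy, Subtype.mk.injEq, Fin.mk.injEq] at hxy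
      exact Subtype.ext (Fin.ext (by omega))
  -- σ and σ⁻¹ map J into I
  have himg : ∀ (τ : Equiv.Perm ↥{v : Fin n | v ∉ S}),
      (∀ x ∈ If', τ x ∈ Jf) → ∀ j ∈ Jf, τ⁻¹ j ∈ If' := by
    intro τ hτ j hj
    have hsub : If'.image τ ⊆ Jf := by
      intro y hy
      obtain ⟨x, hx, rfl⟩ := Finset.mem_image.mp hy
      exact hτ x hx
    have hcardimg : (If'.image τ).card = If'.card :=
      Finset.card_image_of_injective _ τ.injective
    have heq : If'.image τ = Jf :=
      Finset.eq_of_subset_of_card_le hsub (by omega)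
    rw [← heq] at hj
    obtain ⟨x, hx, hxj⟩ := Finset.mem_image.mp hj
    rwa [← hxj, show τ⁻¹ (τ x) = x from τ.symm_apply_apply x]
  have hJI : ∀ j ∈ Jf, σ j ∈ If' := by
    intro j hj
    have := himg σ⁻¹ hIJ' j hj
    rwa [inv_inv] at this
  have hJI' : ∀ j ∈ Jf, σ⁻¹ j ∈ If' := himg σ hIJ
  -- T := J ∪ I is invariant under σ and σ⁻¹
  set T : Finset ↥{v : Fin n | v ∉ S} := Jf ∪ If' with hT_def
  have hTfwd : ∀ x ∈ T, σ x ∈ T := by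
    intro x hx
    rcases Finset.mem_union.mp hx with h | h
    · exact Finset.mem_union.mpr (Or.inr (hJI x h))
    · exact Finset.mem_union.mpr (Or.inl (hIJ x h))
  have hTbwd : ∀ x ∈ T, σ⁻¹ x ∈ T := by
    intro x hx
    rcases Finset.mem_union.mp hx with h | h
    · exact Finset.mem_union.mpr (Or.inr (hJI' x h))
    · exact Finset.mem_union.mpr (Or.inl (hIJ' x h))
  have hzpow : ∀ (m : ℤ) (x : ↥{v : Fin n | v ∉ S}), x ∈ T → (σ ^ m) x ∈ T := by
    intro m
    induction m using Int.induction_on with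
    | zero => intro x hx; simpa using hx
    | succ m ih =>
      intro x hx
      rw [zpow_add_one, Equiv.Perm.mul_apply]
      exact ih _ (hTfwd x hx)
    | pred m ih =>
      intro x hx
      rw [zpow_sub_one, Equiv.Perm.mul_apply]
      exact ih _ (hTbwd x hx)
  -- contradiction
  have hu_mem : u ∈ T := by
    rw [hT_def, Finset.mem_union, hmemJ, hmemI, hu_val]
    omega
  have hc_notmem : c ∉ T := by
    rw [hT_def, Finset.mem_union, hmemJ, hmemI, hc_val]
    omega
  have hcyc := hnodup.isCycleOn_formPerm
  obtain ⟨m, hm⟩ := hcyc.2 (hall u) (hall c)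
  exact hc_notmem (hm ▸ hzpow m u hu_mem)
end

section
/- Fix integers n ≥ 3, ℓ with -1 ≤ ℓ ≤ n-3, and t with 2 ≤ t ≤ n-1. For 1 ≤ i ≤ (n-1-ℓ)/2 define g(i) = i·C(i+ℓ, t) + (n-2i-ℓ)·C(n-i-1, t) + (i+ℓ)·C(n-1, t), where C(a,b) denotes the binomial coefficient. Then the sequence g is convex: for every integer i with 2 ≤ i ≤ ⌊(n-1-ℓ)/2⌋ - 1, g(i) - g(i-1) ≤ g(i+1) - g(i). -/
/-- `g n ℓ t i` is the number of `t`-stars in the graph `K_{i+ℓ} + (I_i ∪ K_{n-2i-ℓ})`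
on `n` vertices, computed from its degree list:
`g(i) = i·C(i+ℓ,t) + (n-2i-ℓ)·C(n-i-1,t) + (i+ℓ)·C(n-1,t)`. -/
def g (n : ℕ) (ℓ : ℤ) (t : ℕ) (i : ℕ) : ℤ :=
  (i : ℤ) * ((((i : ℤ) + ℓ).toNat.choose t : ℕ) : ℤ)
    + ((n : ℤ) - 2 * (i : ℤ) - ℓ) * (((n - i - 1).choose t : ℕ) : ℤ)
    + ((i : ℤ) + ℓ) * (((n - 1).choose t : ℕ) : ℤ)

/-- Convexity of binomial coefficients in the upper argument. -/
lemma choose_convex' (k t : ℕ) : 2 * (k+1).choose t ≤ k.choose t + (k+2).choose t := by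
  cases t with
  | zero => simp
  | succ s =>
    have h1 : (k+2).choose (s+1) = (k+1).choose s + (k+1).choose (s+1) :=
      Nat.choose_succ_succ (k+1) s
    have h2 : (k+1).choose (s+1) = k.choose s + k.choose (s+1) :=
      Nat.choose_succ_succ k s
    have h3 : k.choose s ≤ (k+1).choose s := Nat.choose_le_choose s (Nat.le_succ k)
    omega

set_option maxHeartbeats 1000000 in
/-- Convexity of the `t`-star count `g(i)` of `K_{i+ℓ} + (I_i ∪ K_{n-2i-ℓ})`:
for `2 ≤ i ≤ ⌊(n-1-ℓ)/2⌋ - 1`, `g(i) - g(i-1) ≤ g(i+1) - g(i)`. -/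
theorem stmt6 (n t : ℕ) (ℓ : ℤ) (hn : 3 ≤ n) (hl1 : -1 ≤ ℓ) (hl2 : ℓ ≤ (n : ℤ) - 3)
    (ht1 : 2 ≤ t) (ht2 : t ≤ n - 1) :
    ∀ i : ℕ, 2 ≤ i → (i : ℤ) ≤ ((n : ℤ) - 1 - ℓ) / 2 - 1 →
      g n ℓ t i - g n ℓ t (i - 1) ≤ g n ℓ t (i + 1) - g n ℓ t i := by
  intro i hi hub
  obtain ⟨j, rfl⟩ : ∃ j, i = j + 2 := ⟨i - 2, by omega⟩
  have hn' : 2*(j:ℤ) + ℓ + 7 ≤ (n:ℤ) := by omega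
  obtain ⟨m, rfl⟩ : ∃ m, n = m + j + 4 := ⟨n - j - 4, by omega⟩
  obtain ⟨k, hk⟩ : ∃ k : ℕ, (k:ℤ) = (j:ℤ) + 1 + ℓ := ⟨((j:ℤ)+1+ℓ).toNat, by omega⟩
  simp only [g]
  have c5 : j + 2 - 1 = j + 1 := rfl
  rw [c5]
  have c1 : m + j + 4 - (j + 2) - 1 = m + 1 := by omega
  have c2 : m + j + 4 - (j + 2 + 1) - 1 = m := by omega
  have c3 : m + j + 4 - (j + 1) - 1 = m + 2 := by omega
  rw [c1, c2, c3]
  have e1 : (((j+1:ℕ):ℤ) + ℓ).toNat = k := by omega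
  have e2 : (((j+2:ℕ):ℤ) + ℓ).toNat = k + 1 := by omega
  have e3 : (((j+2+1:ℕ):ℤ) + ℓ).toNat = k + 2 := by omega
  rw [e1, e2, e3]
  have hA : (2 * ((k+1).choose t) : ℤ) ≤ k.choose t + (k+2).choose t := by
    exact_mod_cast choose_convex' k t
  have hB : (2 * ((m+1).choose t) : ℤ) ≤ m.choose t + (m+2).choose t := by
    exact_mod_cast choose_convex' m t
  have hCk : (k.choose t : ℤ) ≤ (k+2).choose t := by
    exact_mod_cast Nat.choose_le_choose t (by omega : k ≤ k + 2)
  have hDm : (m.choose t : ℤ) ≤ (m+2).choose t := by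
    exact_mod_cast Nat.choose_le_choose t (by omega : m ≤ m + 2)
  have h1 : 0 ≤ ((j:ℤ)+2) * ((k.choose t : ℤ) + (k+2).choose t - 2*((k+1).choose t)) :=
    mul_nonneg (by positivity) (by linarith)
  have h2 : 0 ≤ ((m:ℤ) - j - ℓ) * ((m.choose t : ℤ) + (m+2).choose t - 2*((m+1).choose t)) :=
    mul_nonneg (by push_cast at hn' ⊢; omega) (by linarith)
  push_cast
  nlinarith [h1, h2, hCk, hDm]
end

section
/- Fix integers n ≥ 3, ℓ with -1 ≤ ℓ ≤ n-3, and t with 2 ≤ t ≤ n-1, and let i_d, i_0 be integers with 1 ≤ i_d ≤ i_0 ≤ ⌊(n-1-ℓ)/2⌋. Define g(i) = i·C(i+ℓ, t) + (n-2i-ℓ)·C(n-i-1, t) + (i+ℓ)·C(n-1, t). Then max over i_d ≤ i ≤ i_0 of g(i) equals max(g(i_d), g(i_0)). -/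
/-- Strict increase propagates forward under convex differences. -/
lemma aux_incr (h : ℕ → ℤ) (a b : ℕ)
    (hc : ∀ j, a ≤ j → j + 2 ≤ b → h (j+1) - h j ≤ h (j+2) - h (j+1))
    (k : ℕ) (hak : a ≤ k) (hd : h k < h (k+1)) :
    ∀ j, k ≤ j → j + 1 ≤ b → h j < h (j+1) := by
  intro j hj
  induction j, hj using Nat.le_induction with
  | base => intro _; exact hd
  | succ j hkj ih =>
    intro hjb
    have hih := ih (by omega)
    have := hc j (le_trans hak hkj) (by omega)
    linarith

/-- A discretely convex integer-valued function on an interval attains its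
maximum at an endpoint. -/
lemma conv_max (h : ℕ → ℤ) (a b : ℕ) (hab : a ≤ b)
    (hc : ∀ j, a ≤ j → j + 2 ≤ b → h (j+1) - h j ≤ h (j+2) - h (j+1)) :
    ∀ k, a ≤ k → k ≤ b → h k ≤ max (h a) (h b) := by
  have P : ∀ k, a ≤ k → k ≤ b → (h k ≤ h a ∨ ∃ k', k = k' + 1 ∧ a ≤ k' ∧ h k' < h k) := by
    intro k hk
    induction k, hk using Nat.le_induction with
    | base => intro _; left; exact le_rfl
    | succ k hak ih =>
      intro hkb
      rcases ih (by omega) with hle | ⟨k', rfl, hak', hlt⟩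
      · by_cases hk2 : h (k+1) ≤ h k
        · left; linarith
        · right; exact ⟨k, rfl, hak, by linarith⟩
      · have := hc k' hak' (by omega)
        right; exact ⟨k'+1, rfl, by omega, by linarith⟩
  intro k hak hkb
  rcases P k hak hkb with hle | ⟨k', rfl, hak', hlt⟩
  · exact le_trans hle (le_max_left _ _)
  · -- h is strictly increasing from k' to b, so h (k'+1) ≤ h b
    have hincr := aux_incr h a b hc k' hak' hlt
    have : ∀ m, k' + 1 ≤ m → m ≤ b → h (k'+1) ≤ h m := by
      intro m hm
      induction m, hm using Nat.le_induction with
      | base => intro _; exact le_rfl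
      | succ m hm ih =>
        intro hmb
        have h1 := ih (by omega)
        have h2 := hincr m (by omega) (by omega)
        linarith
    exact le_trans (this b (by omega) le_rfl) (le_max_right _ _)

/-- Discrete convexity of `g` in the relevant range. -/
lemma g_convex (n t : ℕ) (ℓ : ℤ) (ht : 2 ≤ t) (hl : -1 ≤ ℓ) (j : ℕ) (hj : 1 ≤ j)
    (hub : 2 * (j : ℤ) + 4 + ℓ ≤ (n : ℤ) - 1) :
    g n ℓ t (j+1) - g n ℓ t j ≤ g n ℓ t (j+2) - g n ℓ t (j+1) := by
  obtain ⟨u, rfl⟩ : ∃ u, t = u + 1 := ⟨t - 1, by omega⟩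
  set p := ((j : ℤ) + ℓ).toNat with hp
  have hjn : 2 * j + 3 ≤ n := by omega
  set q := n - j - 3 with hq
  have e1 : (((j : ℤ) + 1) + ℓ).toNat = p + 1 := by omega
  have e2 : (((j : ℤ) + 2) + ℓ).toNat = p + 2 := by omega
  have f0 : n - j - 1 = q + 2 := by omega
  have f1 : n - (j + 1) - 1 = q + 1 := by omega
  have f2 : n - (j + 2) - 1 = q := by omega
  simp only [g]
  push_cast
  rw [e1, e2, f0, f1, f2, ← hp]
  -- Pascal identities, cast to ℤ
  have PX1 : (((p+1).choose (u+1) : ℕ) : ℤ) = (p.choose u : ℤ) + (p.choose (u+1) : ℤ) := by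
    exact_mod_cast congrArg (Nat.cast : ℕ → ℤ) (Nat.choose_succ_succ p u)
  have PX2 : (((p+2).choose (u+1) : ℕ) : ℤ) = ((p+1).choose u : ℤ) + ((p+1).choose (u+1) : ℤ) := by
    exact_mod_cast congrArg (Nat.cast : ℕ → ℤ) (Nat.choose_succ_succ (p+1) u)
  have PY1 : (((q+1).choose (u+1) : ℕ) : ℤ) = (q.choose u : ℤ) + (q.choose (u+1) : ℤ) := by
    exact_mod_cast congrArg (Nat.cast : ℕ → ℤ) (Nat.choose_succ_succ q u)
  have PY2 : (((q+2).choose (u+1) : ℕ) : ℤ) = ((q+1).choose u : ℤ) + ((q+1).choose (u+1) : ℤ) := by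
    exact_mod_cast congrArg (Nat.cast : ℕ → ℤ) (Nat.choose_succ_succ (q+1) u)
  have mX : (p.choose u : ℤ) ≤ ((p+1).choose u : ℤ) := by
    exact_mod_cast Nat.choose_le_choose u (Nat.le_succ p)
  have mY : (q.choose u : ℤ) ≤ ((q+1).choose u : ℤ) := by
    exact_mod_cast Nat.choose_le_choose u (Nat.le_succ q)
  have hjnn : (0:ℤ) ≤ (j : ℤ) := by positivity
  have hA : (0:ℤ) ≤ (n : ℤ) - 2 * j - 4 - ℓ := by linarith
  have prod1 : (0:ℤ) ≤ (j : ℤ) * (((p+1).choose u : ℤ) - (p.choose u : ℤ)) :=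
    mul_nonneg hjnn (by linarith)
  have prod2 : (0:ℤ) ≤ ((n : ℤ) - 2 * j - 4 - ℓ) * (((q+1).choose u : ℤ) - (q.choose u : ℤ)) :=
    mul_nonneg hA (by linarith)
  have nn1 : (0:ℤ) ≤ ((p+1).choose u : ℤ) := by positivity
  have nn2 : (0:ℤ) ≤ ((q+1).choose u : ℤ) := by positivity
  rw [PX2, PY2, PX1, PY1]
  linarith [prod1, prod2, nn1, nn2]

/-- The maximum of the `t`-star count `g(i)` of `K_{i+ℓ} + (I_i ∪ K_{n-2i-ℓ})` over
`i_d ≤ i ≤ i_0` is `max (g i_d) (g i_0)`. -/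
theorem stmt7 (n t : ℕ) (ℓ : ℤ) (hn : 3 ≤ n) (hl1 : -1 ≤ ℓ) (hl2 : ℓ ≤ (n : ℤ) - 3)
    (ht1 : 2 ≤ t) (ht2 : t ≤ n - 1) (i_d i_0 : ℕ) (hd : 1 ≤ i_d) (hdi : i_d ≤ i_0)
    (hi0 : (i_0 : ℤ) ≤ ((n : ℤ) - 1 - ℓ) / 2) :
    IsGreatest ((fun i => g n ℓ t i) '' Set.Icc i_d i_0)
      (max (g n ℓ t i_d) (g n ℓ t i_0)) := by
  have h2i0 : 2 * (i_0 : ℤ) ≤ (n : ℤ) - 1 - ℓ := by omega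
  constructor
  · rcases le_total (g n ℓ t i_d) (g n ℓ t i_0) with h | h
    · rw [max_eq_right h]; exact ⟨i_0, ⟨hdi, le_rfl⟩, rfl⟩
    · rw [max_eq_left h]; exact ⟨i_d, ⟨le_rfl, hdi⟩, rfl⟩
  · rintro x ⟨k, ⟨hk1, hk2⟩, rfl⟩
    refine conv_max (g n ℓ t) i_d i_0 hdi (fun j hj1 hj2 => ?_) k hk1 hk2
    have hj0 : 1 ≤ j := le_trans hd hj1
    have hji : (j : ℤ) + 2 ≤ (i_0 : ℤ) := by exact_mod_cast hj2
    exact g_convex n t ℓ ht1 hl1 j hj0 (by linarith)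
end

section
/- Fix integers n ≥ 3, ℓ with -1 ≤ ℓ ≤ n-3, and t with 2 ≤ t ≤ n-1, and define g(i) = i·C(i+ℓ, t) + (n-2i-ℓ)·C(n-i-1, t) + (i+ℓ)·C(n-1, t) for 1 ≤ i ≤ i_0 := ⌊(n-1-ℓ)/2⌋. Fix i_d with 1 ≤ i_d ≤ i_0. If i_d < i < i_0, then g(i) < max(g(i_d), g(i_0)); that is, the maximum of g on [i_d, i_0] is attained only at an endpoint. -/
/-- Normal form for `g`: `ee n t j x y = j·C(x,t) + (y-x+1)·C(y,t) + x·C(n-1,t)`. -/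
def ee (n t : ℕ) (j : ℤ) (x y : ℕ) : ℤ :=
  j * (x.choose t : ℤ) + ((y : ℤ) - (x : ℤ) + 1) * (y.choose t : ℤ)
    + (x : ℤ) * ((n - 1).choose t : ℤ)

lemma key_s8 (n t s : ℕ) (j : ℤ) (a1 b1 : ℕ) (hts : t = s + 1)
    (hj : 1 ≤ j) (hab : a1 + 2 ≤ b1) :
    (ee n t j (a1+1) (b1+1) - ee n t (j-1) a1 (b1+2)
        < ee n t (j+1) (a1+2) b1 - ee n t j (a1+1) (b1+1))
      ∨ (ee n t j (a1+1) (b1+1) - ee n t (j-1) a1 (b1+2) = ((n-1).choose t : ℤ)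
          ∧ ee n t (j+1) (a1+2) b1 - ee n t j (a1+1) (b1+1) = ((n-1).choose t : ℤ)) := by
  subst hts
  have pas1 : (a1+1).choose (s+1) = a1.choose s + a1.choose (s+1) :=
    Nat.choose_succ_succ' a1 s
  have pas2 : (a1+2).choose (s+1) = (a1+1).choose s + (a1+1).choose (s+1) :=
    Nat.choose_succ_succ' (a1+1) s
  have pas3 : (b1+1).choose (s+1) = b1.choose s + b1.choose (s+1) :=
    Nat.choose_succ_succ' b1 s
  have pas4 : (b1+2).choose (s+1) = (b1+1).choose s + (b1+1).choose (s+1) :=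
    Nat.choose_succ_succ' (b1+1) s
  have mp : a1.choose s ≤ (a1+1).choose s := Nat.choose_le_choose s (by omega)
  have mq : b1.choose s ≤ (b1+1).choose s := Nat.choose_le_choose s (by omega)
  by_cases hb : s ≤ b1 + 1
  · left
    have hq : 1 ≤ (b1+1).choose s := Nat.choose_pos hb
    simp only [ee]
    push_cast [pas1, pas2, pas3, pas4]
    nlinarith [mul_nonneg (by linarith : (0:ℤ) ≤ j - 1)
        (by exact_mod_cast sub_nonneg.mpr (Int.ofNat_le.mpr mp) :
          (0:ℤ) ≤ ((a1+1).choose s : ℤ) - (a1.choose s : ℤ)),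
      mul_nonneg (by push_cast; omega : (0:ℤ) ≤ (b1:ℤ) - (a1:ℤ) - 1)
        (by exact_mod_cast sub_nonneg.mpr (Int.ofNat_le.mpr mq) :
          (0:ℤ) ≤ ((b1+1).choose s : ℤ) - (b1.choose s : ℤ))]
  · right
    push_neg at hb
    have z : ∀ m : ℕ, m ≤ b1 + 1 → m.choose (s+1) = 0 := fun m hm =>
      Nat.choose_eq_zero_of_lt (by omega)
    have z1 := z a1 (by omega)
    have z2 := z (a1+1) (by omega)
    have z3 := z (a1+2) (by omega)
    have z4 := z b1 (by omega)
    have z5 := z (b1+1) (by omega)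
    have z6 : (b1+2).choose (s+1) = 0 := Nat.choose_eq_zero_of_lt (by omega)
    simp only [ee, z1, z2, z3, z4, z5, z6]
    constructor <;> push_cast <;> ring

lemma g_eq_ee (n t : ℕ) (ℓ : ℤ) (k : ℕ) (hl : -1 ≤ ℓ) (hk : 1 ≤ k) (hkn : k + 1 ≤ n) :
    g n ℓ t k = ee n t (k : ℤ) (((k : ℤ) + ℓ).toNat) (n - k - 1) := by
  have h1 : ((((k : ℤ) + ℓ).toNat : ℕ) : ℤ) = (k : ℤ) + ℓ := by omega
  have h2 : ((n - k - 1 : ℕ) : ℤ) = (n : ℤ) - k - 1 := by omega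
  simp only [g, ee, h1, h2]
  ring

/-- The `t`-star count `g(i)` of `K_{i+ℓ} + (I_i ∪ K_{n-2i-ℓ})` attains its maximum
over `[i_d, i_0]` only at the endpoints: if `i_d < i < i_0` then
`g(i) < max (g i_d) (g i_0)`. -/
theorem stmt8 (n t : ℕ) (ℓ : ℤ) (hn : 3 ≤ n) (hl1 : -1 ≤ ℓ) (hl2 : ℓ ≤ (n : ℤ) - 3)
    (ht1 : 2 ≤ t) (ht2 : t ≤ n - 1) (i_d i_0 : ℕ) (hd : 1 ≤ i_d) (hdi : i_d ≤ i_0)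
    (hi0 : (i_0 : ℤ) ≤ ((n : ℤ) - 1 - ℓ) / 2) :
    ∀ i : ℕ, i_d < i → i < i_0 → g n ℓ t i < max (g n ℓ t i_d) (g n ℓ t i_0) := by
  have h2i0 : 2 * (i_0 : ℤ) ≤ (n : ℤ) - 1 - ℓ := by omega
  have hK : (1 : ℤ) ≤ ((n - 1).choose t : ℤ) := by
    exact_mod_cast Nat.choose_pos ht2
  -- the dichotomy for increments of g
  have key' : ∀ j : ℕ, 2 ≤ j → j + 1 ≤ i_0 →
      (g n ℓ t j - g n ℓ t (j-1) < g n ℓ t (j+1) - g n ℓ t j)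
        ∨ (g n ℓ t j - g n ℓ t (j-1) = ((n-1).choose t : ℤ)
            ∧ g n ℓ t (j+1) - g n ℓ t j = ((n-1).choose t : ℤ)) := by
    intro j hj hji
    have hjn : 2 * (j : ℤ) + 2 ≤ (n : ℤ) - 1 - ℓ := by omega
    set a1 : ℕ := (((j : ℤ)) + ℓ - 1).toNat with ha1
    set b1 : ℕ := n - j - 2 with hb1
    have hja : (((j : ℤ) - 1) + ℓ).toNat = a1 := by omega
    have hja2 : (((j : ℤ)) + ℓ).toNat = a1 + 1 := by omega
    have hja3 : (((j : ℤ) + 1) + ℓ).toNat = a1 + 2 := by omega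
    have hjb : n - (j-1) - 1 = b1 + 2 := by omega
    have hjb2 : n - j - 1 = b1 + 1 := by omega
    have hjb3 : n - (j+1) - 1 = b1 := by omega
    have e1 : g n ℓ t (j-1) = ee n t ((j : ℤ) - 1) a1 (b1+2) := by
      rw [g_eq_ee n t ℓ (j-1) hl1 (by omega) (by omega), hjb]
      have : (((j-1 : ℕ) : ℤ)) = (j : ℤ) - 1 := by omega
      rw [this, hja]
    have e2 : g n ℓ t j = ee n t (j : ℤ) (a1+1) (b1+1) := by
      rw [g_eq_ee n t ℓ j hl1 (by omega) (by omega), hjb2, hja2]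
    have e3 : g n ℓ t (j+1) = ee n t ((j : ℤ) + 1) (a1+2) b1 := by
      rw [g_eq_ee n t ℓ (j+1) hl1 (by omega) (by omega), hjb3]
      have : (((j+1 : ℕ) : ℤ)) = (j : ℤ) + 1 := by omega
      rw [this, hja3]
    rw [e1, e2, e3]
    exact key_s8 n t (t-1) (j : ℤ) a1 b1 (by omega) (by exact_mod_cast by omega : (1:ℤ) ≤ (j:ℤ))
      (by omega)
  have mono : ∀ j : ℕ, 2 ≤ j → j + 1 ≤ i_0 →
      g n ℓ t j - g n ℓ t (j-1) ≤ g n ℓ t (j+1) - g n ℓ t j := by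
    intro j hj hji
    rcases key' j hj hji with h | ⟨h1, h2⟩
    · linarith
    · rw [h1, h2]
  intro i hi1 hi2
  have hi2' : 2 ≤ i := by omega
  have hii0 : i + 1 ≤ i_0 := by omega
  by_cases hpos : 0 < g n ℓ t (i+1) - g n ℓ t i
  · -- increments stay positive upward; max at i_0
    have up : ∀ m : ℕ, i + 1 + m ≤ i_0 →
        0 < g n ℓ t (i+1+m) - g n ℓ t (i+m) ∧ g n ℓ t i < g n ℓ t (i+1+m) := by
      intro m
      induction m with
      | zero => intro _; exact ⟨hpos, by linarith [hpos]⟩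
      | succ m ih =>
        intro hm
        obtain ⟨h1, h2⟩ := ih (by omega)
        have hmono := mono (i+1+m) (by omega) (by omega)
        have ea : i + 1 + m - 1 = i + m := by omega
        have eb : i + 1 + (m+1) = i + 1 + m + 1 := by omega
        have ec : i + (m+1) = i + 1 + m := by omega
        rw [ea] at hmono
        rw [eb, ec]
        constructor <;> linarith
    have := (up (i_0 - i - 1) (by omega)).2
    have e : i + 1 + (i_0 - i - 1) = i_0 := by omega
    rw [e] at this
    exact lt_max_of_lt_right this
  · push_neg at hpos
    have hneg : g n ℓ t i - g n ℓ t (i-1) < 0 := by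
      rcases key' i hi2' hii0 with h | ⟨h1, h2⟩
      · linarith
      · linarith
    have down : ∀ m : ℕ, m + 1 + i_d ≤ i →
        g n ℓ t (i-m) - g n ℓ t (i-m-1) < 0 ∧ g n ℓ t i < g n ℓ t (i-m-1) := by
      intro m
      induction m with
      | zero =>
        intro _
        simp only [Nat.sub_zero]
        exact ⟨hneg, by linarith [hneg]⟩
      | succ m ih =>
        intro hm
        obtain ⟨h1, h2⟩ := ih (by omega)
        have hmono := mono (i-m-1) (by omega) (by omega)
        have ea : i - m - 1 + 1 = i - m := by omega
        have eb : i - (m+1) = i - m - 1 := by omega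
        rw [ea] at hmono
        rw [eb]
        constructor <;> linarith
    have := (down (i - i_d - 1) (by omega)).2
    have e : i - (i - i_d - 1) - 1 = i_d := by omega
    rw [e] at this
    exact lt_max_of_lt_left this
end

section
/- Fix integers n ≥ 3, k with 1 ≤ k ≤ n-2, and t with 2 ≤ t ≤ n-1. For 1 ≤ i ≤ (n-k+1)/2 define h(i) = i·C(i+k-2, t) + (n-k-i+1)·C(n-i-1, t) + (k-1)·C(n-1, t). Then h is convex: for all i with 2 ≤ i ≤ ⌊(n-k+1)/2⌋ - 1, h(i) - h(i-1) ≤ h(i+1) - h(i). Consequently the maximum of h over i_d ≤ i ≤ i_0 (for any 1 ≤ i_d ≤ i_0 ≤ ⌊(n-k+1)/2⌋) equals max(h(i_d), h(i_0)). -/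
/-- `hStar n k t i` is the number of `t`-stars in the graph
`K_{k-1} + (K_i ∪ K_{n-k-i+1})` on `n` vertices:
`h(i) = i·C(i+k-2,t) + (n-k-i+1)·C(n-i-1,t) + (k-1)·C(n-1,t)`. -/
def hStar (n k t i : ℕ) : ℕ :=
  i * (i + k - 2).choose t + (n - k + 1 - i) * (n - i - 1).choose t +
    (k - 1) * (n - 1).choose t

lemma convF (c j t : ℕ) (ht : 1 ≤ t) :
    2 * ((j + 2) * (j + c + 1).choose t) ≤
      (j + 1) * (j + c).choose t + (j + 3) * (j + c + 2).choose t := by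
  obtain ⟨s, rfl⟩ : ∃ s, t = s + 1 := ⟨t - 1, by omega⟩
  have p1 : (j + c + 2).choose (s + 1)
      = (j + c + 1).choose s + (j + c + 1).choose (s + 1) :=
    Nat.choose_succ_succ _ _
  have p2 : (j + c + 1).choose (s + 1)
      = (j + c).choose s + (j + c).choose (s + 1) :=
    Nat.choose_succ_succ _ _
  have hm : (j + c).choose s ≤ (j + c + 1).choose s :=
    Nat.choose_le_choose _ (by omega)
  nlinarith [hm, p1, p2]

lemma hStar_convexN (n k t : ℕ) (hk1 : 1 ≤ k) (ht1 : 1 ≤ t) (i : ℕ)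
    (hi1 : 2 ≤ i) (hi2 : k + 2 * i + 1 ≤ n) :
    2 * hStar n k t i ≤ hStar n k t (i - 1) + hStar n k t (i + 1) := by
  obtain ⟨j, rfl⟩ : ∃ j, i = j + 2 := ⟨i - 2, by omega⟩
  obtain ⟨c, rfl⟩ : ∃ c, k = c + 1 := ⟨k - 1, by omega⟩
  obtain ⟨m, rfl⟩ : ∃ m, n = c + 2 * j + m + 6 := ⟨n - (c + 2 * j + 6), by omega⟩
  have h1 := convF c j t ht1
  have h2 := convF c (j + m + 2) t ht1
  simp only [hStar,
    show j + 2 - 1 = j + 1 from by omega,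
    show j + 2 + (c + 1) - 2 = j + c + 1 from by omega,
    show j + 1 + (c + 1) - 2 = j + c from by omega,
    show j + 2 + 1 + (c + 1) - 2 = j + c + 2 from by omega,
    show c + 2 * j + m + 6 - (c + 1) + 1 - (j + 2) = j + m + 4 from by omega,
    show c + 2 * j + m + 6 - (c + 1) + 1 - (j + 1) = j + m + 5 from by omega,
    show c + 2 * j + m + 6 - (c + 1) + 1 - (j + 2 + 1) = j + m + 3 from by omega,
    show c + 2 * j + m + 6 - (j + 2) - 1 = j + m + 2 + c + 1 from by omega,
    show c + 2 * j + m + 6 - (j + 1) - 1 = j + m + 2 + c + 2 from by omega,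
    show c + 2 * j + m + 6 - (j + 2 + 1) - 1 = j + m + 2 + c from by omega,
    show c + 1 - 1 = c from by omega]
  linarith


/-- For `n ≥ 3`, `1 ≤ k ≤ n-2`, `2 ≤ t ≤ n-1`, the `t`-star count `h(i)` of
`K_{k-1} + (K_i ∪ K_{n-k-i+1})` is convex on `1 ≤ i ≤ (n-k+1)/2`:
`h(i) - h(i-1) ≤ h(i+1) - h(i)` for `2 ≤ i ≤ ⌊(n-k+1)/2⌋ - 1`; consequently its
maximum over any `[i_d, i_0]` inside the range is `max (h i_d) (h i_0)`. -/
theorem stmt12 (n k t : ℕ) (hn : 3 ≤ n) (hk1 : 1 ≤ k) (hk2 : k ≤ n - 2)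
    (ht1 : 2 ≤ t) (ht2 : t ≤ n - 1) :
    (∀ i : ℕ, 2 ≤ i → i ≤ (n - k + 1) / 2 - 1 →
      (hStar n k t i : ℤ) - (hStar n k t (i - 1) : ℤ) ≤
        (hStar n k t (i + 1) : ℤ) - (hStar n k t i : ℤ)) ∧
      ∀ i_d i_0 : ℕ, 1 ≤ i_d → i_d ≤ i_0 → i_0 ≤ (n - k + 1) / 2 →
        IsGreatest ((fun i => hStar n k t i) '' Set.Icc i_d i_0)
          (max (hStar n k t i_d) (hStar n k t i_0)) := by
  set H : ℕ → ℤ := fun i => (hStar n k t i : ℤ) with hH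
  have conv : ∀ i : ℕ, 2 ≤ i → k + 2 * i + 1 ≤ n →
      2 * H i ≤ H (i - 1) + H (i + 1) := by
    intro i h1 h2
    have := hStar_convexN n k t hk1 (by omega) i h1 h2
    simp only [hH]
    exact_mod_cast this
  constructor
  · intro i hi1 hi2
    have hin : k + 2 * i + 1 ≤ n := by omega
    have := conv i hi1 hin
    linarith
  · intro i_d i_0 hd1 hdo h0B
    -- difference monotone
    have mono : ∀ a b : ℕ, 1 ≤ a → a ≤ b → b + 1 ≤ i_0 →
        H (a + 1) - H a ≤ H (b + 1) - H b := by
      intro a b ha hab hb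
      induction b with
      | zero => omega
      | succ b ih =>
        rcases Nat.lt_or_ge b a with h | h
        · have : a = b + 1 := by omega
          subst this; rfl
        · have step := conv (b + 1) (by omega)
            (by have : b + 1 + 1 ≤ (n - k + 1) / 2 := by omega
                omega)
          simp only [show b + 1 - 1 = b from by omega] at step
          have := ih h (by omega)
          linarith
    have hub : ∀ i : ℕ, i_d ≤ i → i ≤ i_0 → H i ≤ max (H i_d) (H i_0) := by
      intro i hid hio
      rcases eq_or_lt_of_le hid with rfl | hlt
      · exact le_max_left _ _
      rcases eq_or_lt_of_le hio with rfl | hlt2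
      · exact le_max_right _ _
      obtain ⟨p, rfl⟩ : ∃ p, i = p + 1 := ⟨i - 1, by omega⟩
      rcases le_or_gt (H (p + 1)) (H p) with hC | hC
      · -- descending: H i ≤ H i_d
        have D : ∀ m : ℕ, i_d ≤ m → m ≤ p + 1 → H m ≤ H i_d := by
          intro m hm
          induction m, hm using Nat.le_induction with
          | base => intro _; exact le_refl _
          | succ m hm ih =>
            intro hmle
            have hd : H (m + 1) - H m ≤ H (p + 1) - H p :=
              mono m p (by omega) (by omega) (by omega)
            have := ih (by omega)
            have : H (m + 1) ≤ H m := by linarith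
            linarith [ih (by omega)]
        exact le_trans (D (p + 1) (by omega) le_rfl) (le_max_left _ _)
      · -- ascending: H i ≤ H i_0
        have U : ∀ m : ℕ, p + 1 ≤ m → m ≤ i_0 → H (p + 1) ≤ H m := by
          intro m hm
          induction m, hm using Nat.le_induction with
          | base => intro _; exact le_refl _
          | succ m hm ih =>
            intro hmle
            have hd : H (p + 1) - H p ≤ H (m + 1) - H m :=
              mono p m (by omega) (by omega) (by omega)
            have := ih (by omega)
            linarith
        exact le_trans (U i_0 (by omega) le_rfl) (le_max_right _ _)
    constructor
    · rcases max_cases (hStar n k t i_d) (hStar n k t i_0) with ⟨he, _⟩ | ⟨he, _⟩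
      · exact ⟨i_d, ⟨le_rfl, hdo⟩, he.symm⟩
      · exact ⟨i_0, ⟨hdo, le_rfl⟩, he.symm⟩
    · rintro x ⟨i, ⟨h1, h2⟩, rfl⟩
      have := hub i h1 h2
      simp only [hH] at this
      have hmax : (max (hStar n k t i_d) (hStar n k t i_0) : ℤ)
          = max ((hStar n k t i_d : ℤ)) ((hStar n k t i_0 : ℤ)) := by push_cast; rfl
      exact_mod_cast hmax ▸ this
end

section
/- Let n, ℓ, t be integers with -1 ≤ ℓ ≤ n-3 and (n+ℓ+1)/2 ≤ t ≤ n-1, and set i_0 = ⌊(n-1-ℓ)/2⌋. Then C(ℓ+1, t) + (ℓ+1)·C(n-1, t) + (n-ℓ-2)·C(n-2, t) ≤ i_0·C(i_0+ℓ, t) + (i_0+ℓ)·C(n-1, t) + (n-2i_0-ℓ)·C(n-i_0-1, t). Moreover, if 0 ≤ ℓ ≤ n-5, the inequality is strict. -/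
set_option maxHeartbeats 1000000 in
/-- For `-1 ≤ ℓ ≤ n-3` and `(n+ℓ+1)/2 ≤ t ≤ n-1` (i.e. `n+ℓ+1 ≤ 2t`), with
`i₀ = ⌊(n-1-ℓ)/2⌋`, the number of `t`-stars of `G₁ = K_{ℓ+1} + (I_1 ∪ K_{n-ℓ-2})`,
namely `C(ℓ+1,t) + (ℓ+1)·C(n-1,t) + (n-ℓ-2)·C(n-2,t)`, is at most that of
`G_{i₀} = K_{i₀+ℓ} + (I_{i₀} ∪ K_{n-2i₀-ℓ})`, namely
`i₀·C(i₀+ℓ,t) + (i₀+ℓ)·C(n-1,t) + (n-2i₀-ℓ)·C(n-i₀-1,t)`; moreover the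
inequality is strict when `0 ≤ ℓ ≤ n-5`. -/


theorem stmt13 (n t : ℕ) (ℓ : ℤ) (hl1 : -1 ≤ ℓ) (hl2 : ℓ ≤ (n : ℤ) - 3)
    (ht1 : (n : ℤ) + ℓ + 1 ≤ 2 * (t : ℤ)) (ht2 : t ≤ n - 1)
    (i0 : ℕ) (hi0 : (i0 : ℤ) = ((n : ℤ) - 1 - ℓ) / 2) :
    (((ℓ + 1).toNat.choose t : ℕ) : ℤ) + (ℓ + 1) * (((n - 1).choose t : ℕ) : ℤ) +
        ((n : ℤ) - ℓ - 2) * (((n - 2).choose t : ℕ) : ℤ) ≤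
      (i0 : ℤ) * ((((i0 : ℤ) + ℓ).toNat.choose t : ℕ) : ℤ) +
        ((i0 : ℤ) + ℓ) * (((n - 1).choose t : ℕ) : ℤ) +
        ((n : ℤ) - 2 * (i0 : ℤ) - ℓ) * (((n - i0 - 1).choose t : ℕ) : ℤ) ∧
    (0 ≤ ℓ → ℓ ≤ (n : ℤ) - 5 →
      (((ℓ + 1).toNat.choose t : ℕ) : ℤ) + (ℓ + 1) * (((n - 1).choose t : ℕ) : ℤ) +
          ((n : ℤ) - ℓ - 2) * (((n - 2).choose t : ℕ) : ℤ) <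
        (i0 : ℤ) * ((((i0 : ℤ) + ℓ).toNat.choose t : ℕ) : ℤ) +
          ((i0 : ℤ) + ℓ) * (((n - 1).choose t : ℕ) : ℤ) +
          ((n : ℤ) - 2 * (i0 : ℤ) - ℓ) * (((n - i0 - 1).choose t : ℕ) : ℤ)) := by
  have h1 : (ℓ + 1).toNat.choose t = 0 := Nat.choose_eq_zero_of_lt (by omega)
  have h2 : ((i0 : ℤ) + ℓ).toNat.choose t = 0 := Nat.choose_eq_zero_of_lt (by omega)
  have h3 : (n - i0 - 1).choose t = 0 := Nat.choose_eq_zero_of_lt (by omega)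
  have hA : (0 : ℤ) < ((n - 1).choose t : ℤ) := by
    exact_mod_cast Nat.choose_pos (by omega : t ≤ n - 1)
  set A : ℤ := ((n - 1).choose t : ℤ) with hAdef
  set B : ℤ := ((n - 2).choose t : ℤ) with hBdef
  have hBnn : (0 : ℤ) ≤ B := by positivity
  -- the key identity in the case t ≤ n - 2
  have hidZ : t + 1 ≤ n - 1 → B * ((n : ℤ) - 1) = A * ((n : ℤ) - 1 - t) := by
    intro h
    have hid : (n - 2).choose t * (n - 1) = (n - 1).choose t * (n - 1 - t) := by
      have := Nat.choose_mul_succ_eq (n - 2) t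
      rwa [show n - 2 + 1 = n - 1 by omega] at this
    rw [hAdef, hBdef]
    zify [show 1 ≤ n by omega, show 2 ≤ n by omega, show t ≤ n - 1 by omega] at hid
    linarith
  have key : ((n : ℤ) - ℓ - 2) * B ≤ ((i0 : ℤ) - 1) * A := by
    rcases eq_or_lt_of_le ht2 with h | h
    · have hB0 : (n - 2).choose t = 0 := Nat.choose_eq_zero_of_lt (by omega)
      have hB : B = 0 := by rw [hBdef, hB0]; rfl
      rw [hB, mul_zero]
      exact mul_nonneg (by omega) hA.le
    · have hid := hidZ (by omega)
      have hfac : ((n : ℤ) - ℓ - 2) * ((n : ℤ) - 1 - t) ≤ ((i0 : ℤ) - 1) * ((n : ℤ) - 1) := by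
        have a1 : (1 : ℤ) ≤ (n : ℤ) - 1 - t := by omega
        have a2 : ((n : ℤ) - 1 - t) ≤ (i0 : ℤ) - 1 := by omega
        have a3 : (1 : ℤ) ≤ (n : ℤ) - ℓ - 2 := by omega
        have a4 : ((n : ℤ) - ℓ - 2) ≤ (n : ℤ) - 1 := by omega
        nlinarith
      have h4 : (((n : ℤ) - ℓ - 2) * B) * ((n : ℤ) - 1) ≤ (((i0 : ℤ) - 1) * A) * ((n : ℤ) - 1) := by
        nlinarith [mul_le_mul_of_nonneg_left hfac hA.le]
      exact le_of_mul_le_mul_right h4 (by omega)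
  have keyS : 0 ≤ ℓ → ℓ ≤ (n : ℤ) - 5 → ((n : ℤ) - ℓ - 2) * B < ((i0 : ℤ) - 1) * A := by
    intro hl hl'
    have hi2 : (2 : ℤ) ≤ (i0 : ℤ) := by omega
    rcases eq_or_lt_of_le ht2 with h | h
    · have hB0 : (n - 2).choose t = 0 := Nat.choose_eq_zero_of_lt (by omega)
      have hB : B = 0 := by rw [hBdef, hB0]; rfl
      rw [hB, mul_zero]
      exact mul_pos (by omega) hA
    · have hid := hidZ (by omega)
      have hfac : ((n : ℤ) - ℓ - 2) * ((n : ℤ) - 1 - t) < ((i0 : ℤ) - 1) * ((n : ℤ) - 1) := by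
        have a1 : (1 : ℤ) ≤ (n : ℤ) - 1 - t := by omega
        have a2 : ((n : ℤ) - 1 - t) ≤ (i0 : ℤ) - 1 := by omega
        have a3 : (1 : ℤ) ≤ (n : ℤ) - ℓ - 2 := by omega
        have a4 : ((n : ℤ) - ℓ - 2) ≤ (n : ℤ) - 2 := by omega
        nlinarith
      have h4 : (((n : ℤ) - ℓ - 2) * B) * ((n : ℤ) - 1) < (((i0 : ℤ) - 1) * A) * ((n : ℤ) - 1) := by
        nlinarith [mul_lt_mul_of_pos_left hfac hA]
      exact lt_of_mul_lt_mul_right h4 (by omega)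
  rw [h1, h2, h3]
  simp only [Nat.cast_zero, Nat.cast_ofNat]
  constructor
  · linarith
  · intro hl hl'
    have := keyS hl hl'
    linarith
end

section
/- Let n ≥ 6 be an integer. Then the number of 2-stars satisfies s_2(G₁) > s_2(G_{i_0}), where s_2(G₁) = (n-2)(n²-4n+5)/2, and s_2(G_{i_0}) = (n-1)(5n²-14n+5)/16 if n is odd, and s_2(G_{i_0}) = (n-2)(5n²-14n+16)/16 if n is even. -/
/-- For `n ≥ 6`: `s₂(G₁) = (n-2)(n²-4n+5)/2` strictly exceeds `s₂(G_{i₀})`, which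
equals `(n-1)(5n²-14n+5)/16` if `n` is odd and `(n-2)(5n²-14n+16)/16` if `n` is
even. -/
theorem stmt15 (n : ℕ) (hn : 6 ≤ n) :
    (Odd n → ((n : ℚ) - 2) * ((n : ℚ)^2 - 4 * n + 5) / 2 >
      ((n : ℚ) - 1) * (5 * (n : ℚ)^2 - 14 * n + 5) / 16) ∧
    (Even n → ((n : ℚ) - 2) * ((n : ℚ)^2 - 4 * n + 5) / 2 >
      ((n : ℚ) - 2) * (5 * (n : ℚ)^2 - 14 * n + 16) / 16) := by
  have h : (6 : ℚ) ≤ n := by exact_mod_cast hn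
  constructor <;> intro _ <;> nlinarith [sq_nonneg ((n:ℚ) - 6), sq_nonneg ((n:ℚ) - 3)]
end

section
/- Define f(n,t) = s_t(G₁(n)) − s_t(G_{i_0}(n)) where, for ℓ = 0, s_t(G₁(n)) = (n-2)·C(n-2,t) + C(n-1,t), and s_t(G_{i_0}(n)) = ((n+1)/2)·C((n-1)/2, t) + ((n-1)/2)·C(n-1, t) when n is odd, and s_t(G_{i_0}(n)) = (n/2-1)·C(n/2-1, t) + (n/2-1)·C(n-1, t) + 2·C(n/2, t) when n is even. Then for all integers t ≥ 3 and n ≥ 2t, f(n+1, t) − f(n, t) > 0. -/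
lemma two_pow_mul_choose_le (s k : ℕ) :
    2 ^ k * Nat.choose s k ≤ Nat.choose (2 * s) k := by
  induction k with
  | zero => simp
  | succ k ih =>
    rcases le_or_gt s k with hs | hs
    · simp [Nat.choose_eq_zero_of_lt (Nat.lt_succ_of_le hs)]
    · have h1 := Nat.choose_succ_right_eq (2*s) k
      have h2 := Nat.choose_succ_right_eq s k
      have key : (2 ^ (k+1) * Nat.choose s (k+1)) * (k+1) ≤ Nat.choose (2*s) (k+1) * (k+1) := by
        calc (2 ^ (k+1) * Nat.choose s (k+1)) * (k+1)
            = 2 ^ k * (Nat.choose s (k+1) * (k+1)) * 2 := by ring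
          _ = 2 ^ k * (Nat.choose s k * (s - k)) * 2 := by rw [h2]
          _ = (2 ^ k * Nat.choose s k) * (2 * (s - k)) := by ring
          _ ≤ Nat.choose (2*s) k * (2*s - k) := Nat.mul_le_mul ih (by omega)
          _ = Nat.choose (2*s) (k+1) * (k+1) := h1.symm
      exact Nat.le_of_mul_le_mul_right key (Nat.succ_pos k)

lemma pow_bound (s : ℕ) : s + 4 ≤ 2 ^ (s + 2) := by
  induction s with
  | zero => norm_num
  | succ s ih =>
    have : 2 ^ (s + 1 + 2) = 2 * 2 ^ (s + 2) := by ring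
    omega

lemma even_key (s u : ℕ) :
    Nat.choose (2*s+2*u+4) (s+1) + Nat.choose (s+u+2) (s+2) < Nat.choose (2*s+2*u+4) (s+2) := by
  set A := Nat.choose (2*s+2*u+4) (s+2) with hA
  set B := Nat.choose (2*s+2*u+4) (s+1) with hB
  set D := Nat.choose (s+u+2) (s+2) with hD
  have h1 : A * (s+2) = B * (s+2*u+3) := by
    have := Nat.choose_succ_right_eq (2*s+2*u+4) (s+1)
    rw [show 2*s+2*u+4 - (s+1) = s+2*u+3 from by omega] at this
    exact this
  have hM : 2 ^ (s+2) * D ≤ A := by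
    have := two_pow_mul_choose_le (s+u+2) (s+2)
    rwa [show 2*(s+u+2) = 2*s+2*u+4 from by ring] at this
  have hAD : (s+4) * D ≤ A := le_trans (Nat.mul_le_mul_right D (pow_bound s)) hM
  have hDpos : 1 ≤ D := Nat.choose_pos (by omega)
  have hAB : B * (s+3) ≤ A * (s+2) := by
    rw [h1]; exact Nat.mul_le_mul_left B (by omega)
  have key : (s+3) * (B + D) < (s+3) * A := by nlinarith
  exact Nat.lt_of_mul_lt_mul_left key

lemma odd_key (s u : ℕ) :
    Nat.choose (s+u+3) (s+3) + 2 * Nat.choose (s+u+3) (s+2) + (s+u+2) * Nat.choose (2*s+2*u+5) (s+1)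
      < Nat.choose (2*s+2*u+5) (s+3) + (s+u+4) * Nat.choose (2*s+2*u+5) (s+2) := by
  set P := Nat.choose (2*s+2*u+5) (s+2) with hP
  set Q := Nat.choose (2*s+2*u+5) (s+1) with hQ
  set q := Nat.choose (s+u+3) (s+3) with hq
  set q1 := Nat.choose (s+u+3) (s+2) with hq1
  set a := Nat.choose (2*s+2*u+5) (s+3) with ha
  have h1 : P * (s+2) = Q * (s+2*u+4) := by
    have := Nat.choose_succ_right_eq (2*s+2*u+5) (s+1)
    rw [show 2*s+2*u+5 - (s+1) = s+2*u+4 from by omega] at this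
    exact this
  have h2 : q * (s+3) = q1 * (u+1) := by
    have := Nat.choose_succ_right_eq (s+u+3) (s+2)
    rw [show s+u+3 - (s+2) = u+1 from by omega] at this
    exact this
  have h3 : Nat.choose (2*s+2*u+6) (s+2) = Q + P := by
    rw [show 2*s+2*u+6 = (2*s+2*u+5)+1 from by omega]
    exact Nat.choose_succ_succ _ (s+1)
  have hM : 2 ^ (s+2) * q1 ≤ Q + P := by
    have := two_pow_mul_choose_le (s+u+3) (s+2)
    rw [show 2*(s+u+3) = 2*s+2*u+6 from by ring, h3] at this
    exact this
  have hQP : Q ≤ P := by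
    have : Q * (s+2) ≤ P * (s+2) := by
      calc Q * (s+2) ≤ Q * (s+2*u+4) := Nat.mul_le_mul_left Q (by omega)
        _ = P * (s+2) := h1.symm
    exact Nat.le_of_mul_le_mul_right this (by omega)
  have hq1P : 2 * q1 ≤ P := by
    have h4 : 4 * q1 ≤ Q + P := le_trans (Nat.mul_le_mul_right q1 (by have := pow_bound s; omega)) hM
    omega
  have hq1pos : 1 ≤ q1 := Nat.choose_pos (by omega)
  -- (u+2)*P ≥ q + 2q1 + 1
  have hc2 : q + 2*q1 + 1 ≤ (u+2) * P := by
    have hmul : (s+3) * (q + 2*q1 + 1) ≤ (s+3) * ((u+2) * P) := by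
      calc (s+3) * (q + 2*q1 + 1) = q*(s+3) + (2*s+6)*q1 + (s+3)*1 := by ring
        _ = (u+1)*q1 + (2*s+6)*q1 + (s+3)*1 := by rw [h2]; ring
        _ ≤ (u+1)*q1 + (2*s+6)*q1 + (s+3)*q1 := by
            exact Nat.add_le_add_left (Nat.mul_le_mul_left _ hq1pos) _
        _ = (3*s+u+10)*q1 := by ring
        _ ≤ (2*(s+3)*(u+2))*q1 := Nat.mul_le_mul_right q1 (by nlinarith)
        _ = (s+3)*(u+2)*(2*q1) := by ring
        _ ≤ (s+3)*(u+2)*P := Nat.mul_le_mul_left _ hq1P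
        _ = (s+3)*((u+2)*P) := by ring
    exact Nat.le_of_mul_le_mul_left hmul (by omega)
  -- final, multiplied by (s+2u+4)
  have hh1 : (s+u+2) * (P * (s+2)) = (s+u+2) * (Q * (s+2*u+4)) := by rw [h1]
  have final : (s+2*u+4) * (q + 2*q1 + (s+u+2)*Q) < (s+2*u+4) * (a + (s+u+4)*P) := by
    nlinarith [hh1, hc2, Nat.zero_le a]
  exact Nat.lt_of_mul_lt_mul_left final


/-- `fGap n t = s_t(G₁(n)) - s_t(G_{i₀}(n))` for `ℓ = 0`, where
`s_t(G₁(n)) = (n-2)·C(n-2,t) + C(n-1,t)` and `s_t(G_{i₀}(n))` equals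
`((n+1)/2)·C((n-1)/2,t) + ((n-1)/2)·C(n-1,t)` for odd `n` and
`(n/2-1)·C(n/2-1,t) + (n/2-1)·C(n-1,t) + 2·C(n/2,t)` for even `n`. -/
def fGap (n t : ℕ) : ℤ :=
  (((n - 2) * Nat.choose (n - 2) t + Nat.choose (n - 1) t : ℕ) : ℤ) -
    (if Even n then
      ((n / 2 - 1) * Nat.choose (n / 2 - 1) t + (n / 2 - 1) * Nat.choose (n - 1) t +
        2 * Nat.choose (n / 2) t : ℕ)
    else
      ((n + 1) / 2 * Nat.choose ((n - 1) / 2) t +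
        (n - 1) / 2 * Nat.choose (n - 1) t : ℕ))

lemma even_case (s u : ℕ) :
    0 < fGap (2*s+2*u+6 + 1) (s+3) - fGap (2*s+2*u+6) (s+3) := by
  have heven : Even (2*s+2*u+6) := ⟨s+u+3, by ring⟩
  have hodd : ¬ Even (2*s+2*u+6+1) := by
    rintro ⟨r, hr⟩; omega
  unfold fGap
  rw [if_pos heven, if_neg hodd]
  rw [show 2*s+2*u+6+1-2 = 2*s+2*u+5 from by omega,
      show 2*s+2*u+6+1-1 = 2*s+2*u+6 from by omega,
      show (2*s+2*u+6+1+1)/2 = s+u+4 from by omega,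
      show (2*s+2*u+6-2) = 2*s+2*u+4 from by omega,
      show (2*s+2*u+6-1) = 2*s+2*u+5 from by omega,
      show (2*s+2*u+6)/2 = s+u+3 from by omega,
      show s+u+3-1 = s+u+2 from by omega]
  have h1 : (2*s+2*u+6).choose (s+3) = (2*s+2*u+5).choose (s+2) + (2*s+2*u+5).choose (s+3) := by
    rw [show 2*s+2*u+6 = (2*s+2*u+5)+1 from by omega]
    exact Nat.choose_succ_succ _ (s+2)
  have h2 : (2*s+2*u+5).choose (s+3) = (2*s+2*u+4).choose (s+2) + (2*s+2*u+4).choose (s+3) := by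
    rw [show 2*s+2*u+5 = (2*s+2*u+4)+1 from by omega]
    exact Nat.choose_succ_succ _ (s+2)
  have h3 : (2*s+2*u+5).choose (s+2) = (2*s+2*u+4).choose (s+1) + (2*s+2*u+4).choose (s+2) := by
    rw [show 2*s+2*u+5 = (2*s+2*u+4)+1 from by omega]
    exact Nat.choose_succ_succ _ (s+1)
  have h4 : (s+u+3).choose (s+3) = (s+u+2).choose (s+2) + (s+u+2).choose (s+3) := by
    rw [show s+u+3 = (s+u+2)+1 from by omega]
    exact Nat.choose_succ_succ _ (s+2)
  have key := even_key s u
  push_cast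
  have h1z : ((2*s+2*u+6).choose (s+3) : ℤ) = (2*s+2*u+5).choose (s+2) + (2*s+2*u+5).choose (s+3) := by
    exact_mod_cast h1
  have h2z : ((2*s+2*u+5).choose (s+3) : ℤ) = (2*s+2*u+4).choose (s+2) + (2*s+2*u+4).choose (s+3) := by
    exact_mod_cast h2
  have h3z : ((2*s+2*u+5).choose (s+2) : ℤ) = (2*s+2*u+4).choose (s+1) + (2*s+2*u+4).choose (s+2) := by
    exact_mod_cast h3
  have h4z : ((s+u+3).choose (s+3) : ℤ) = (s+u+2).choose (s+2) + (s+u+2).choose (s+3) := by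
    exact_mod_cast h4
  have keyz : ((2*s+2*u+4).choose (s+1) : ℤ) + (s+u+2).choose (s+2) + 1 ≤ (2*s+2*u+4).choose (s+2) := by
    exact_mod_cast key
  have M : (0:ℤ) ≤ (s:ℤ) + u + 3 := by positivity
  have mh1z : ((s:ℤ)+u+3) * (((2*s+2*u+6).choose (s+3) : ℤ)) = ((s:ℤ)+u+3) * ((((2*s+2*u+5).choose (s+2):ℤ)) + (2*s+2*u+5).choose (s+3)) := by rw [h1z]
  have mh2z : ((s:ℤ)+u+3) * (((2*s+2*u+5).choose (s+3) : ℤ)) = ((s:ℤ)+u+3) * ((((2*s+2*u+4).choose (s+2):ℤ)) + (2*s+2*u+4).choose (s+3)) := by rw [h2z]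
  have mh3z : ((s:ℤ)+u+3) * (((2*s+2*u+5).choose (s+2) : ℤ)) = ((s:ℤ)+u+3) * ((((2*s+2*u+4).choose (s+1):ℤ)) + (2*s+2*u+4).choose (s+2)) := by rw [h3z]
  have mh4z : ((s:ℤ)+u+3) * (((s+u+3).choose (s+3) : ℤ)) = ((s:ℤ)+u+3) * ((((s+u+2).choose (s+2):ℤ)) + (s+u+2).choose (s+3)) := by rw [h4z]
  have hprod : ((s:ℤ)+u+2) ≤ ((s:ℤ)+u+2) * (((2*s+2*u+4).choose (s+2) : ℤ) - (2*s+2*u+4).choose (s+1) - (s+u+2).choose (s+2)) :=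
    le_mul_of_one_le_right (by positivity) (by linarith)
  have mkeyz : ((s:ℤ)+u+2) * (((2*s+2*u+4).choose (s+1) : ℤ) + (s+u+2).choose (s+2) + 1) ≤ ((s:ℤ)+u+2) * ((2*s+2*u+4).choose (s+2) : ℤ) :=
    mul_le_mul_of_nonneg_left keyz (by positivity)
  linarith [h1z, h2z, h3z, h4z, mh1z, mh2z, mh3z, mh4z, hprod, mkeyz]

lemma odd_case (s u : ℕ) :
    0 < fGap (2*s+2*u+7 + 1) (s+3) - fGap (2*s+2*u+7) (s+3) := by
  have heven : Even (2*s+2*u+7+1) := ⟨s+u+4, by ring⟩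
  have hodd : ¬ Even (2*s+2*u+7) := by rintro ⟨r, hr⟩; omega
  unfold fGap
  rw [if_pos heven, if_neg hodd]
  rw [show 2*s+2*u+7+1-2 = 2*s+2*u+6 from by omega,
      show 2*s+2*u+7+1-1 = 2*s+2*u+7 from by omega,
      show (2*s+2*u+7+1)/2 = s+u+4 from by omega,
      show s+u+4-1 = s+u+3 from by omega,
      show (2*s+2*u+7-2) = 2*s+2*u+5 from by omega,
      show (2*s+2*u+7-1) = 2*s+2*u+6 from by omega,
      show (2*s+2*u+6)/2 = s+u+3 from by omega]
  have h1 : (2*s+2*u+7).choose (s+3) = (2*s+2*u+6).choose (s+2) + (2*s+2*u+6).choose (s+3) := by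
    rw [show 2*s+2*u+7 = (2*s+2*u+6)+1 from by omega]
    exact Nat.choose_succ_succ _ (s+2)
  have h2 : (2*s+2*u+6).choose (s+3) = (2*s+2*u+5).choose (s+2) + (2*s+2*u+5).choose (s+3) := by
    rw [show 2*s+2*u+6 = (2*s+2*u+5)+1 from by omega]
    exact Nat.choose_succ_succ _ (s+2)
  have h3 : (2*s+2*u+6).choose (s+2) = (2*s+2*u+5).choose (s+1) + (2*s+2*u+5).choose (s+2) := by
    rw [show 2*s+2*u+6 = (2*s+2*u+5)+1 from by omega]
    exact Nat.choose_succ_succ _ (s+1)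
  have h4 : (s+u+4).choose (s+3) = (s+u+3).choose (s+2) + (s+u+3).choose (s+3) := by
    rw [show s+u+4 = (s+u+3)+1 from by omega]
    exact Nat.choose_succ_succ _ (s+2)
  have key := odd_key s u
  push_cast
  have h1z : ((2*s+2*u+7).choose (s+3) : ℤ) = (2*s+2*u+6).choose (s+2) + (2*s+2*u+6).choose (s+3) := by
    exact_mod_cast h1
  have h2z : ((2*s+2*u+6).choose (s+3) : ℤ) = (2*s+2*u+5).choose (s+2) + (2*s+2*u+5).choose (s+3) := by
    exact_mod_cast h2
  have h3z : ((2*s+2*u+6).choose (s+2) : ℤ) = (2*s+2*u+5).choose (s+1) + (2*s+2*u+5).choose (s+2) := by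
    exact_mod_cast h3
  have h4z : ((s+u+4).choose (s+3) : ℤ) = (s+u+3).choose (s+2) + (s+u+3).choose (s+3) := by
    exact_mod_cast h4
  have keyz : ((s+u+3).choose (s+3) : ℤ) + 2 * (s+u+3).choose (s+2) + ((s:ℤ)+u+2) * (2*s+2*u+5).choose (s+1) + 1
      ≤ ((2*s+2*u+5).choose (s+3) : ℤ) + ((s:ℤ)+u+4) * (2*s+2*u+5).choose (s+2) := by
    exact_mod_cast key
  have mh1z : ((s:ℤ)+u+3) * (((2*s+2*u+7).choose (s+3) : ℤ)) = ((s:ℤ)+u+3) * ((((2*s+2*u+6).choose (s+2):ℤ)) + (2*s+2*u+6).choose (s+3)) := by rw [h1z]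
  have mh2z : ((s:ℤ)+u+3) * (((2*s+2*u+6).choose (s+3) : ℤ)) = ((s:ℤ)+u+3) * ((((2*s+2*u+5).choose (s+2):ℤ)) + (2*s+2*u+5).choose (s+3)) := by rw [h2z]
  have mh3z : ((s:ℤ)+u+3) * (((2*s+2*u+6).choose (s+2) : ℤ)) = ((s:ℤ)+u+3) * ((((2*s+2*u+5).choose (s+1):ℤ)) + (2*s+2*u+5).choose (s+2)) := by rw [h3z]
  have mh4z : ((s:ℤ)+u+3) * (((s+u+4).choose (s+3) : ℤ)) = ((s:ℤ)+u+3) * ((((s+u+3).choose (s+2):ℤ)) + (s+u+3).choose (s+3)) := by rw [h4z]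
  linarith [h1z, h2z, h3z, h4z, mh1z, mh2z, mh3z, mh4z, keyz]

/-- Inductive step: for all integers `t ≥ 3` and `n ≥ 2t`, `f(n+1,t) - f(n,t) > 0`. -/
theorem stmt17 (n t : ℕ) (ht : 3 ≤ t) (hn : 2 * t ≤ n) :
    0 < fGap (n + 1) t - fGap n t := by
  obtain ⟨s, rfl⟩ : ∃ s, t = s + 3 := ⟨t - 3, by omega⟩
  rcases Nat.even_or_odd n with he | ho
  · obtain ⟨m, hm⟩ := he
    obtain ⟨u, rfl⟩ : ∃ u, n = 2*s+2*u+6 := ⟨(n - 2*s - 6)/2, by omega⟩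
    exact even_case s u
  · obtain ⟨m, hm⟩ := ho
    obtain ⟨u, rfl⟩ : ∃ u, n = 2*s+2*u+7 := ⟨(n - 2*s - 7)/2, by omega⟩
    exact odd_case s u
end

section
/- Let n ≥ 4 and 1 ≤ t ≤ n/2 be integers. Then s_t(G₁) ≥ s_t(G_{i_0}), where G₁ = K_1 + (I_1 ∪ K_{n-2}) and G_{i_0} = K_{i_0} + (I_{i_0} ∪ K_{n-2i_0}) with i_0 = ⌊(n-1)/2⌋, both on n vertices. Moreover, the inequality is strict for n ≥ 6. -/
instance (n a b : ℕ) : DecidableRel (stdG n a b).Adj := fun v w =>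
  inferInstanceAs (Decidable (_ ∧ _))

/-- `st t G` is the number of `t`-stars of `G`: the number of edges when `t = 1`,
and `∑_v C(d(v), t)` when `t ≥ 2`. -/
def st {n : ℕ} (t : ℕ) (G : SimpleGraph (Fin n)) [DecidableRel G.Adj] : ℕ :=
  if t = 1 then G.edgeFinset.card else ∑ v : Fin n, (G.degree v).choose t


/-- Absorption identity: `(m+1-t) * C(m+1,t) = (m+1) * C(m,t)`. -/
lemma absorb (m t : ℕ) : (m + 1 - t) * (m + 1).choose t = (m + 1) * m.choose t := by
  rw [Nat.add_one_mul_choose_eq, Nat.choose_succ_right_eq, mul_comm]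

/-- `2^t * C(m,t) ≤ C(2m,t)`. -/
lemma lemA : ∀ t m : ℕ, 2 ^ t * m.choose t ≤ (2 * m).choose t := by
  intro t
  induction t with
  | zero => simp
  | succ k ih =>
    intro m
    by_cases h : m ≤ k
    · simp [Nat.choose_eq_zero_of_lt (by omega : m < k + 1)]
    · have h1 : m.choose (k + 1) * (k + 1) = m.choose k * (m - k) :=
        Nat.choose_succ_right_eq m k
      have h2 : (2 * m).choose (k + 1) * (k + 1) = (2 * m).choose k * (2 * m - k) :=
        Nat.choose_succ_right_eq (2 * m) k
      have key : 2 ^ (k + 1) * m.choose (k + 1) * (k + 1) ≤ (2 * m).choose (k + 1) * (k + 1) := by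
        calc 2 ^ (k + 1) * m.choose (k + 1) * (k + 1)
            = 2 ^ (k + 1) * (m.choose (k + 1) * (k + 1)) := by ring
          _ = 2 ^ (k + 1) * (m.choose k * (m - k)) := by rw [h1]
          _ = (2 * (m - k)) * (2 ^ k * m.choose k) := by ring
          _ ≤ (2 * (m - k)) * ((2 * m).choose k) :=
              Nat.mul_le_mul_left _ (ih m)
          _ ≤ (2 * m - k) * ((2 * m).choose k) :=
              Nat.mul_le_mul_right _ (by omega)
          _ = (2 * m).choose (k + 1) * (k + 1) := by rw [h2]; ring
      exact Nat.le_of_mul_le_mul_right key (by omega)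

/-- strict: `2^(t-1) * C(i,t) < C(2i-1,t)` for `2 ≤ t ≤ i`, stated with `t = s+2`. -/
lemma lemB : ∀ s i : ℕ, s + 2 ≤ i → 2 ^ (s + 1) * i.choose (s + 2) < (2 * i - 1).choose (s + 2) := by
  intro s
  induction s with
  | zero =>
    intro i hi
    have e1 : i.choose 2 * 2 = i.choose 1 * (i - 1) := Nat.choose_succ_right_eq i 1
    have e2 : (2 * i - 1).choose 2 * 2 = (2 * i - 1).choose 1 * (2 * i - 1 - 1) :=
      Nat.choose_succ_right_eq (2 * i - 1) 1
    rw [Nat.choose_one_right] at e1 e2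
    have key : 2 ^ 1 * i.choose 2 * 2 < (2 * i - 1).choose 2 * 2 := by
      rw [e2]
      have : 2 ^ 1 * i.choose 2 * 2 = (i * (i - 1)) * 2 := by
        rw [mul_assoc, e1]; ring
      rw [this]
      have h2 : 2 * i - 1 - 1 = (i - 1) * 2 := by omega
      rw [h2, ← mul_assoc]
      have h1 : i * (i - 1) < (2 * i - 1) * (i - 1) :=
        mul_lt_mul_of_pos_right (by omega) (by omega)
      omega
    exact Nat.lt_of_mul_lt_mul_right key
  | succ k ih =>
    intro i hi
    have ih' := ih i (by omega)
    have h1 : i.choose (k + 3) * (k + 3) = i.choose (k + 2) * (i - (k + 2)) :=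
      Nat.choose_succ_right_eq i (k + 2)
    have h2 : (2 * i - 1).choose (k + 3) * (k + 3)
        = (2 * i - 1).choose (k + 2) * (2 * i - 1 - (k + 2)) :=
      Nat.choose_succ_right_eq (2 * i - 1) (k + 2)
    have key : 2 ^ (k + 2) * i.choose (k + 3) * (k + 3)
        < (2 * i - 1).choose (k + 3) * (k + 3) := by
      calc 2 ^ (k + 2) * i.choose (k + 3) * (k + 3)
          = 2 ^ (k + 2) * (i.choose (k + 3) * (k + 3)) := by ring
        _ = 2 ^ (k + 2) * (i.choose (k + 2) * (i - (k + 2))) := by rw [h1]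
        _ = (2 * (i - (k + 2))) * (2 ^ (k + 1) * i.choose (k + 2)) := by ring
        _ < (2 * (i - (k + 2))) * ((2 * i - 1).choose (k + 2)) := by
            exact mul_lt_mul_of_pos_left ih' (by omega)
        _ ≤ (2 * i - 1 - (k + 2)) * ((2 * i - 1).choose (k + 2)) :=
            Nat.mul_le_mul_right _ (by omega)
        _ = (2 * i - 1).choose (k + 3) * (k + 3) := by rw [h2]; ring
    exact Nat.lt_of_mul_lt_mul_right key

/-- strict: `2^(t-2) * C(i+1,t) < C(2i,t)` for `2 ≤ i`, `2 ≤ t ≤ i+1`, with `t = s+2`. -/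
lemma lemC : ∀ s i : ℕ, 2 ≤ i → s + 2 ≤ i + 1 →
    2 ^ s * (i + 1).choose (s + 2) < (2 * i).choose (s + 2) := by
  intro s
  induction s with
  | zero =>
    intro i hi _
    have e1 : (i + 1).choose 2 * 2 = (i + 1).choose 1 * (i + 1 - 1) :=
      Nat.choose_succ_right_eq (i + 1) 1
    have e2 : (2 * i).choose 2 * 2 = (2 * i).choose 1 * (2 * i - 1) :=
      Nat.choose_succ_right_eq (2 * i) 1
    rw [Nat.choose_one_right] at e1 e2
    have key : 2 ^ 0 * (i + 1).choose 2 * 2 < (2 * i).choose 2 * 2 := by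
      rw [e2]
      have h0 : 2 ^ 0 * (i + 1).choose 2 * 2 = (i + 1) * (i + 1 - 1) := by
        rw [pow_zero, one_mul, e1]
      rw [h0]
      calc (i + 1) * (i + 1 - 1) = (i + 1) * i := by congr 1
        _ < (2 * i) * (2 * i - 1) := by
            apply Nat.mul_lt_mul_of_lt_of_le (by omega) (by omega) (by omega)
    exact Nat.lt_of_mul_lt_mul_right key
  | succ k ih =>
    intro i hi hk
    have ih' := ih i hi (by omega)
    have h1 : (i + 1).choose (k + 3) * (k + 3) = (i + 1).choose (k + 2) * (i + 1 - (k + 2)) :=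
      Nat.choose_succ_right_eq (i + 1) (k + 2)
    have h2 : (2 * i).choose (k + 3) * (k + 3)
        = (2 * i).choose (k + 2) * (2 * i - (k + 2)) :=
      Nat.choose_succ_right_eq (2 * i) (k + 2)
    have key : 2 ^ (k + 1) * (i + 1).choose (k + 3) * (k + 3)
        < (2 * i).choose (k + 3) * (k + 3) := by
      calc 2 ^ (k + 1) * (i + 1).choose (k + 3) * (k + 3)
          = 2 ^ (k + 1) * ((i + 1).choose (k + 3) * (k + 3)) := by ring
        _ = 2 ^ (k + 1) * ((i + 1).choose (k + 2) * (i + 1 - (k + 2))) := by rw [h1]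
        _ = (2 * (i + 1 - (k + 2))) * (2 ^ k * (i + 1).choose (k + 2)) := by ring
        _ < (2 * (i + 1 - (k + 2))) * ((2 * i).choose (k + 2)) := by
            exact mul_lt_mul_of_pos_left ih' (by omega)
        _ ≤ (2 * i - (k + 2)) * ((2 * i).choose (k + 2)) :=
            Nat.mul_le_mul_right _ (by omega)
        _ = (2 * i).choose (k + 3) * (k + 3) := by rw [h2]; ring
    exact Nat.lt_of_mul_lt_mul_right key

lemma powlin1 : ∀ t : ℕ, 4 ≤ t → 3 * t + 2 ≤ 2 ^ t := by
  intro t ht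
  induction t with
  | zero => omega
  | succ k ih =>
    rcases Nat.lt_or_ge k 4 with h | h
    · have hk : k = 3 := by omega
      subst hk; norm_num
    · have h1 := ih (by omega)
      have h2 : (2:ℕ) ^ (k+1) = 2 * 2 ^ k := by ring
      have h3 : (5:ℕ) ≤ 2 ^ k := by
        calc (5:ℕ) ≤ 2 ^ 4 := by norm_num
          _ ≤ 2 ^ k := Nat.pow_le_pow_right (by norm_num) h
      omega

lemma powlin2 : ∀ t : ℕ, 4 ≤ t → 4 * t + 25 ≤ 3 * 2 ^ t := by
  intro t ht
  induction t with
  | zero => omega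
  | succ k ih =>
    rcases Nat.lt_or_ge k 4 with h | h
    · have hk : k = 3 := by omega
      subst hk; norm_num
    · have h1 := ih (by omega)
      have h2 : (2:ℕ) ^ (k+1) = 2 * 2 ^ k := by ring
      have h3 : (5:ℕ) ≤ 2 ^ k := by
        calc (5:ℕ) ≤ 2 ^ 4 := by norm_num
          _ ≤ 2 ^ k := Nat.pow_le_pow_right (by norm_num) h
      omega

/-- numeric inequality for the odd case, with `t = v+2`, `i = v+2+u`. -/
lemma numN (v u : ℕ) (hi : 1 ≤ v + u) :
    (v + u + 3) * (v + 2 * u + 2) ≤ (2 * (v + u + 2) * u + (v + 2)) * 2 ^ (v + 1) := by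
  by_cases hp : v + u + 3 ≤ 2 ^ (v + 1)
  · rcases Nat.eq_zero_or_pos u with rfl | hu
    · -- u = 0
      have : (v + 0 + 3) * (v + 2 * 0 + 2) = (v + 2) * (v + 3) := by ring
      rw [this]
      have h2 : (2 * (v + 0 + 2) * 0 + (v + 2)) = (v + 2) := by ring
      rw [h2]
      exact Nat.mul_le_mul_left _ (by simpa using hp)
    · have h1 : v + 2 * u + 2 ≤ 2 * (v + u + 2) * u + (v + 2) := by nlinarith
      calc (v + u + 3) * (v + 2 * u + 2) ≤ 2 ^ (v+1) * (2 * (v + u + 2) * u + (v + 2)) :=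
            Nat.mul_le_mul hp h1
        _ = _ := by ring
  · push_neg at hp
    by_cases hsm : v + u + 2 ≤ 5
    · have hv : v ≤ 3 := by omega
      have hu2 : u ≤ 3 := by omega
      interval_cases v <;> interval_cases u <;> simp_all <;> omega
    · -- i = v+u+2 ≥ 6
      have h2u : v + 4 ≤ 2 * u := by
        rcases Nat.lt_or_ge v 2 with h4 | h4
        · omega
        · have hp1 := powlin1 (v + 2) (by omega)
          have h2 : (2:ℕ) ^ (v + 2) = 2 * 2 ^ (v+1) := by ring
          omega
      have hfin : (v + u + 3) * (v + 2 * u + 2) ≤ (2 * (v + u + 2) * u + (v + 2)) * 2 := by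
        nlinarith [Nat.mul_le_mul_right u h2u, Nat.mul_le_mul_right (v+2) h2u]
      calc (v + u + 3) * (v + 2 * u + 2) ≤ (2 * (v + u + 2) * u + (v + 2)) * 2 := hfin
        _ ≤ (2 * (v + u + 2) * u + (v + 2)) * 2 ^ (v+1) := by
            apply Nat.mul_le_mul_left
            calc (2:ℕ) = 2 ^ 1 := by norm_num
              _ ≤ 2 ^ (v+1) := Nat.pow_le_pow_right (by norm_num) (by omega)

/-- numeric inequality for the even case, with `t = v+2`, `i = v+u+1` (so `u = i+1-t`). -/
lemma numM (v u : ℕ) (hi : 2 ≤ v + u) :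
    (v + 2 * u + 1) * (v + u + 9) ≤ (2 * (v + u + 1) * u + (v + u + 2)) * 2 ^ (v + 2) := by
  by_cases hp : v + u + 9 ≤ 2 ^ (v + 2)
  · have h1 : v + 2 * u + 1 ≤ 2 * (v + u + 1) * u + (v + u + 2) := by nlinarith
    exact Nat.mul_le_mul h1 hp
  · push_neg at hp
    by_cases hsm : v + u + 1 ≤ 5
    · have hv : v ≤ 4 := by omega
      have hu2 : u ≤ 4 := by omega
      interval_cases v <;> interval_cases u <;> simp_all <;> omega
    · -- i ≥ 6
      have h4u : (v + u + 1) + 8 ≤ 4 * u := by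
        rcases Nat.lt_or_ge v 2 with h4 | h4
        · omega
        · have hp1 := powlin2 (v + 2) (by omega)
          omega
      have hfin : (v + 2 * u + 1) * (v + u + 9) ≤ (2 * (v + u + 1) * u + (v + u + 2)) * 4 := by
        nlinarith [Nat.mul_le_mul_right (v+u+1) h4u, Nat.mul_le_mul_right u h4u]
      calc (v + 2 * u + 1) * (v + u + 9) ≤ (2 * (v + u + 1) * u + (v + u + 2)) * 4 := hfin
        _ ≤ (2 * (v + u + 1) * u + (v + u + 2)) * 2 ^ (v+2) := by
            apply Nat.mul_le_mul_left
            calc (4:ℕ) = 2 ^ 2 := by norm_num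
              _ ≤ 2 ^ (v+2) := Nat.pow_le_pow_right (by norm_num) (by omega)

/-- Core strict inequality, odd case `n = 2i+1`: for `3 ≤ i`, `2 ≤ t ≤ i`. -/
lemma odd_core (i t : ℕ) (hi : 3 ≤ i) (ht : 2 ≤ t) (hti : t ≤ i) :
    i * (2 * i).choose t + (i + 1) * i.choose t
      < (2 * i - 1) * (2 * i - 1).choose t + (2 * i).choose t := by
  obtain ⟨v, rfl⟩ : ∃ v, t = v + 2 := ⟨t - 2, by omega⟩
  obtain ⟨u, rfl⟩ : ∃ u, i = v + u + 2 := ⟨i - v - 2, by omega⟩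
  have h2 : 2 * (v + u + 2) - 1 = 2 * v + 2 * u + 3 := by omega
  have h1 : 2 * (v + u + 2) = 2 * v + 2 * u + 4 := by ring
  rw [h2, h1]
  set A := (2 * v + 2 * u + 3).choose (v + 2) with hA
  set B := (v + u + 2).choose (v + 2) with hB
  set D := (2 * v + 2 * u + 4).choose (v + 2) with hD
  have key1 : (v + 2 * u + 2) * D = (2 * v + 2 * u + 4) * A := by
    have e : 2 * v + 2 * u + 3 + 1 - (v + 2) = v + 2 * u + 2 := by omega
    have := absorb (2 * v + 2 * u + 3) (v + 2)
    rw [e] at this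
    simpa [hA, hD, show 2 * v + 2 * u + 3 + 1 = 2 * v + 2 * u + 4 from by ring] using this
  have key2 : 2 ^ (v + 1) * B < A := by
    have := lemB v (v + u + 2) (by omega)
    have e : 2 * (v + u + 2) - 1 = 2 * v + 2 * u + 3 := by omega
    rwa [e] at this
  have key3 : (v + u + 3) * (v + 2 * u + 2) ≤ (2 * (v + u + 2) * u + (v + 2)) * 2 ^ (v + 1) :=
    numN v u (by omega)
  apply Nat.lt_of_mul_lt_mul_left (a := v + 2 * u + 2)
  calc (v + 2 * u + 2) * ((v + u + 2) * D + (v + u + 2 + 1) * B)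
      = (v + u + 2) * ((v + 2 * u + 2) * D) + ((v + u + 3) * (v + 2 * u + 2)) * B := by ring
    _ = (v + u + 2) * ((2 * v + 2 * u + 4) * A) + ((v + u + 3) * (v + 2 * u + 2)) * B := by
        rw [key1]
    _ ≤ (v + u + 2) * ((2 * v + 2 * u + 4) * A)
          + ((2 * (v + u + 2) * u + (v + 2)) * 2 ^ (v + 1)) * B :=
        Nat.add_le_add_left (Nat.mul_le_mul_right B key3) _
    _ < (v + u + 2) * ((2 * v + 2 * u + 4) * A) + (2 * (v + u + 2) * u + (v + 2)) * A := by
        apply Nat.add_lt_add_left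
        calc (2 * (v + u + 2) * u + (v + 2)) * 2 ^ (v + 1) * B
            = (2 * (v + u + 2) * u + (v + 2)) * (2 ^ (v + 1) * B) := by ring
          _ < (2 * (v + u + 2) * u + (v + 2)) * A :=
              mul_lt_mul_of_pos_left key2 (by positivity)
    _ = (v + 2 * u + 2) * (2 * v + 2 * u + 3) * A + (2 * v + 2 * u + 4) * A := by ring
    _ = (v + 2 * u + 2) * (2 * v + 2 * u + 3) * A + (v + 2 * u + 2) * D := by rw [key1]
    _ = (v + 2 * u + 2) * ((2 * v + 2 * u + 3) * A + D) := by ring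

/-- Core strict inequality, even case `n = 2i+2`: for `3 ≤ i`, `2 ≤ t ≤ i+1`. -/
lemma even_core (i t : ℕ) (hi : 3 ≤ i) (ht : 2 ≤ t) (hti : t ≤ i + 1) :
    i * (2 * i + 1).choose t + i * i.choose t + 2 * (i + 1).choose t
      < 2 * i * (2 * i).choose t + (2 * i + 1).choose t := by
  obtain ⟨v, rfl⟩ : ∃ v, t = v + 2 := ⟨t - 2, by omega⟩
  obtain ⟨u, rfl⟩ : ∃ u, i = v + u + 1 := ⟨i - v - 1, by omega⟩
  have h1 : 2 * (v + u + 1) = 2 * v + 2 * u + 2 := by ring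
  have h2 : 2 * (v + u + 1) + 1 = 2 * v + 2 * u + 3 := by ring
  rw [h2, h1]
  set E := (2 * v + 2 * u + 3).choose (v + 2) with hE
  set D := (2 * v + 2 * u + 2).choose (v + 2) with hD
  set B := (v + u + 1).choose (v + 2) with hB
  set B' := (v + u + 1 + 1).choose (v + 2) with hB'
  have key1 : (v + 2 * u + 1) * E = (2 * v + 2 * u + 3) * D := by
    have e : 2 * v + 2 * u + 2 + 1 - (v + 2) = v + 2 * u + 1 := by omega
    have := absorb (2 * v + 2 * u + 2) (v + 2)
    rw [e] at this
    simpa [hE, hD, show 2 * v + 2 * u + 2 + 1 = 2 * v + 2 * u + 3 from by ring] using this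
  have hAa : 2 ^ (v + 2) * B ≤ D := by
    have := lemA (v + 2) (v + u + 1)
    rwa [h1] at this
  have hCc : 2 ^ v * B' < D := by
    have := lemC v (v + u + 1) (by omega) (by omega)
    rwa [h1] at this
  have key3 : (v + 2 * u + 1) * (v + u + 9)
      ≤ (2 * (v + u + 1) * u + (v + u + 2)) * 2 ^ (v + 2) := numM v u (by omega)
  have c2 : (v + 2 * u + 1) * ((v + u + 1) * B + 2 * B')
      < (2 * (v + u + 1) * u + (v + u + 2)) * D := by
    apply Nat.lt_of_mul_lt_mul_left (a := 2 ^ (v + 2))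
    calc 2 ^ (v + 2) * ((v + 2 * u + 1) * ((v + u + 1) * B + 2 * B'))
        = (v + 2 * u + 1) * (v + u + 1) * (2 ^ (v + 2) * B)
            + ((v + 2 * u + 1) * 8) * (2 ^ v * B') := by ring
      _ ≤ (v + 2 * u + 1) * (v + u + 1) * D + ((v + 2 * u + 1) * 8) * (2 ^ v * B') :=
          Nat.add_le_add_right (Nat.mul_le_mul_left _ hAa) _
      _ < (v + 2 * u + 1) * (v + u + 1) * D + ((v + 2 * u + 1) * 8) * D := by
          apply Nat.add_lt_add_left
          exact mul_lt_mul_of_pos_left hCc (by positivity)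
      _ = ((v + 2 * u + 1) * (v + u + 9)) * D := by ring
      _ ≤ ((2 * (v + u + 1) * u + (v + u + 2)) * 2 ^ (v + 2)) * D :=
          Nat.mul_le_mul_right D key3
      _ = 2 ^ (v + 2) * ((2 * (v + u + 1) * u + (v + u + 2)) * D) := by ring
  apply Nat.lt_of_mul_lt_mul_left (a := v + 2 * u + 1)
  calc (v + 2 * u + 1) * ((v + u + 1) * E + (v + u + 1) * B + 2 * B')
      = (v + u + 1) * ((v + 2 * u + 1) * E)
          + (v + 2 * u + 1) * ((v + u + 1) * B + 2 * B') := by ring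
    _ = (v + u + 1) * ((2 * v + 2 * u + 3) * D)
          + (v + 2 * u + 1) * ((v + u + 1) * B + 2 * B') := by rw [key1]
    _ < (v + u + 1) * ((2 * v + 2 * u + 3) * D)
          + (2 * (v + u + 1) * u + (v + u + 2)) * D := Nat.add_lt_add_left c2 _
    _ = (v + 2 * u + 1) * (2 * v + 2 * u + 2) * D + (2 * v + 2 * u + 3) * D := by ring
    _ = (v + 2 * u + 1) * (2 * v + 2 * u + 2) * D + (v + 2 * u + 1) * E := by rw [key1]
    _ = (v + 2 * u + 1) * ((2 * v + 2 * u + 2) * D + E) := by ring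

lemma stdG_adj {n a b : ℕ} (v w : Fin n) :
    (stdG n a b).Adj v w ↔
      (v : ℕ) ≠ (w : ℕ) ∧ ((v : ℕ) < a ∨ (w : ℕ) < a ∨ (a + b ≤ (v : ℕ) ∧ a + b ≤ (w : ℕ))) := by
  show (v ≠ w ∧ _) ↔ _
  rw [ne_eq, Fin.ext_iff]

lemma card_val_lt (n c : ℕ) (h : c ≤ n) :
    (Finset.univ.filter fun w : Fin n => (w : ℕ) < c).card = c := by
  have hsub : ∀ m ∈ Finset.range c, m < n := fun m hm => by
    simp only [Finset.mem_range] at hm; omega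
  have he : (Finset.univ.filter fun w : Fin n => (w : ℕ) < c)
      = (Finset.range c).attachFin hsub := by
    ext w
    simp [Finset.mem_attachFin]
  rw [he, Finset.card_attachFin]
  exact Finset.card_range c

lemma card_val_ge (n c : ℕ) (h : c ≤ n) :
    (Finset.univ.filter fun w : Fin n => c ≤ (w : ℕ)).card = n - c := by
  have he : (Finset.univ.filter fun w : Fin n => c ≤ (w : ℕ))
      = Finset.univ \ (Finset.univ.filter fun w : Fin n => (w : ℕ) < c) := by
    ext w
    simp only [Finset.mem_filter, Finset.mem_sdiff, Finset.mem_univ, true_and]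
    omega
  rw [he, Finset.card_sdiff_of_subset (Finset.filter_subset _ _), card_val_lt n c h, Finset.card_univ,
    Fintype.card_fin]

lemma deg_lo {n a b : ℕ} (v : Fin n) (hv : (v : ℕ) < a) :
    (stdG n a b).degree v = n - 1 := by
  show ((stdG n a b).neighborFinset v).card = n - 1
  have he : (stdG n a b).neighborFinset v = Finset.univ.erase v := by
    ext w
    rw [SimpleGraph.mem_neighborFinset, stdG_adj, Finset.mem_erase]
    simp only [ne_eq, Fin.ext_iff, Finset.mem_univ, and_true]
    omega
  rw [he, Finset.card_erase_of_mem (Finset.mem_univ v), Finset.card_univ, Fintype.card_fin]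

lemma deg_mid {n a b : ℕ} (v : Fin n) (hv1 : a ≤ (v : ℕ)) (hv2 : (v : ℕ) < a + b) :
    (stdG n a b).degree v = a := by
  show ((stdG n a b).neighborFinset v).card = a
  have he : (stdG n a b).neighborFinset v
      = Finset.univ.filter fun w : Fin n => (w : ℕ) < a := by
    ext w
    rw [SimpleGraph.mem_neighborFinset, stdG_adj, Finset.mem_filter]
    simp only [ne_eq, Fin.ext_iff, Finset.mem_univ, true_and]
    omega
  rw [he, card_val_lt n a (by omega)]

lemma deg_hi {n a b : ℕ} (v : Fin n) (hv : a + b ≤ (v : ℕ)) :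
    (stdG n a b).degree v = n - b - 1 := by
  have hvn : (v : ℕ) < n := v.isLt
  show ((stdG n a b).neighborFinset v).card = n - b - 1
  have he : (stdG n a b).neighborFinset v
      = (Finset.univ.filter fun w : Fin n => (w : ℕ) < a ∨ a + b ≤ (w : ℕ)).erase v := by
    ext w
    rw [SimpleGraph.mem_neighborFinset, stdG_adj, Finset.mem_erase, Finset.mem_filter]
    simp only [ne_eq, Fin.ext_iff, Finset.mem_univ, true_and]
    omega
  rw [he]
  have hmem : v ∈ Finset.univ.filter fun w : Fin n => (w : ℕ) < a ∨ a + b ≤ (w : ℕ) := by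
    simp; omega
  rw [Finset.card_erase_of_mem hmem]
  have hsplit : (Finset.univ.filter fun w : Fin n => (w : ℕ) < a ∨ a + b ≤ (w : ℕ))
      = (Finset.univ.filter fun w : Fin n => (w : ℕ) < a)
        ∪ (Finset.univ.filter fun w : Fin n => a + b ≤ (w : ℕ)) := by
    rw [Finset.filter_or]
  rw [hsplit, Finset.card_union_of_disjoint, card_val_lt n a (by omega),
    card_val_ge n (a+b) (by omega)]
  · omega
  · rw [Finset.disjoint_filter]
    intro x _ hx
    omega

lemma sum_formula (n a b t : ℕ) (hab : a + b ≤ n) :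
    ∑ v : Fin n, ((stdG n a b).degree v).choose t
      = a * (n - 1).choose t + b * a.choose t + (n - (a + b)) * (n - b - 1).choose t := by
  classical
  rw [← Finset.sum_filter_add_sum_filter_not Finset.univ (fun v : Fin n => (v : ℕ) < a)]
  rw [← Finset.sum_filter_add_sum_filter_not
      (Finset.univ.filter fun v : Fin n => ¬ (v : ℕ) < a) (fun v : Fin n => (v : ℕ) < a + b)]
  have h1 : ∑ v ∈ Finset.univ.filter (fun v : Fin n => (v : ℕ) < a),
      ((stdG n a b).degree v).choose t = a * (n - 1).choose t := by
    rw [Finset.sum_congr rfl (fun v hv => by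
      rw [deg_lo v (by simpa using hv)]), Finset.sum_const, card_val_lt n a (by omega),
      smul_eq_mul]
  have h2 : ∑ v ∈ (Finset.univ.filter fun v : Fin n => ¬ (v : ℕ) < a).filter
      (fun v : Fin n => (v : ℕ) < a + b), ((stdG n a b).degree v).choose t
      = b * a.choose t := by
    rw [Finset.filter_filter]
    rw [Finset.sum_congr rfl (fun v hv => by
      simp only [Finset.mem_filter] at hv
      rw [deg_mid v (by omega) hv.2.2]), Finset.sum_const, smul_eq_mul]
    congr 1
    have he : Finset.univ.filter (fun v : Fin n => ¬ (v : ℕ) < a ∧ (v : ℕ) < a + b)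
        = (Finset.univ.filter fun v : Fin n => (v : ℕ) < a + b)
          \ (Finset.univ.filter fun v : Fin n => (v : ℕ) < a) := by
      ext w; simp; omega
    rw [he, Finset.card_sdiff_of_subset (by
        intro x hx
        simp only [Finset.mem_filter] at hx ⊢
        exact ⟨hx.1, by omega⟩), card_val_lt n (a+b) hab, card_val_lt n a (by omega)]
    omega
  have h3 : ∑ v ∈ (Finset.univ.filter fun v : Fin n => ¬ (v : ℕ) < a).filter
      (fun v : Fin n => ¬ (v : ℕ) < a + b), ((stdG n a b).degree v).choose t
      = (n - (a + b)) * (n - b - 1).choose t := by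
    rw [Finset.filter_filter]
    rw [Finset.sum_congr rfl (fun v hv => by
      simp only [Finset.mem_filter] at hv
      rw [deg_hi v (by omega)]), Finset.sum_const, smul_eq_mul]
    congr 1
    have he : Finset.univ.filter (fun v : Fin n => ¬ (v : ℕ) < a ∧ ¬ (v : ℕ) < a + b)
        = Finset.univ.filter (fun v : Fin n => a + b ≤ (v : ℕ)) := by
      ext w; simp; omega
    rw [he, card_val_ge n (a+b) hab]
  rw [h1, h2, h3]
  ring

lemma st_two {n t : ℕ} (ht : 2 ≤ t) (G : SimpleGraph (Fin n)) [DecidableRel G.Adj] :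
    st t G = ∑ v : Fin n, (G.degree v).choose t := by
  rw [st, if_neg (by omega)]

lemma st_one {n : ℕ} (G : SimpleGraph (Fin n)) [DecidableRel G.Adj] :
    2 * st 1 G = ∑ v : Fin n, (G.degree v).choose 1 := by
  rw [st, if_pos rfl]
  simp only [Nat.choose_one_right]
  exact (SimpleGraph.sum_degrees_eq_twice_card_edges G).symm

/-- For `n ≥ 4` and `1 ≤ t ≤ n/2`, `s_t(G₁) ≥ s_t(G_{i₀})` where
`G₁ = K_1 + (I_1 ∪ K_{n-2})` and `G_{i₀} = K_{i₀} + (I_{i₀} ∪ K_{n-2i₀})` with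
`i₀ = ⌊(n-1)/2⌋`; moreover the inequality is strict for `n ≥ 6`. -/
theorem stmt18 (n t : ℕ) (hn : 4 ≤ n) (ht1 : 1 ≤ t) (ht2 : t ≤ n / 2) :
    st t (stdG n ((n - 1) / 2) ((n - 1) / 2)) ≤ st t (stdG n 1 1) ∧
      (6 ≤ n → st t (stdG n ((n - 1) / 2) ((n - 1) / 2)) < st t (stdG n 1 1)) := by
  by_cases h4 : n = 4
  · subst h4
    have e : (4 - 1) / 2 = 1 := by norm_num
    rw [e]
    exact ⟨le_rfl, by omega⟩
  have hn5 : 5 ≤ n := by omega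
  obtain ⟨i, hi⟩ : ∃ i, (n - 1) / 2 = i := ⟨_, rfl⟩
  rw [hi]
  have hi2 : 2 ≤ i := by omega
  have hpar : n = 2 * i + 1 ∨ n = 2 * i + 2 := by omega
  rcases eq_or_lt_of_le ht1 with ht1' | htt2
  · -- t = 1
    obtain rfl : t = 1 := ht1'.symm
    have e1 := st_one (stdG n i i)
    have e2 := st_one (stdG n 1 1)
    rw [sum_formula n i i 1 (by omega)] at e1
    rw [sum_formula n 1 1 1 (by omega)] at e2
    simp only [Nat.choose_one_right] at e1 e2
    rcases hpar with rfl | rfl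
    · -- n = 2i+1, odd
      have hlt2 : 3 ≤ i → 2 * st 1 (stdG (2*i+1) i i) < 2 * st 1 (stdG (2*i+1) 1 1) := by
        intro hi3
        rw [e1, e2]
        obtain ⟨j, rfl⟩ : ∃ j, i = j + 3 := ⟨i - 3, by omega⟩
        simp only [show 2*(j+3)+1-1 = 2*j+6 from by omega,
          show 2*(j+3)+1-((j+3)+(j+3)) = 1 from by omega,
          show 2*(j+3)+1-(j+3)-1 = j+3 from by omega,
          show 2*(j+3)+1-(1+1) = 2*j+5 from by omega,
          show 2*(j+3)+1-1-1 = 2*j+5 from by omega,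
          show 2*j+6-1 = 2*j+5 from by omega]
        nlinarith [sq_nonneg j]
      have hle2 : 2 * st 1 (stdG (2*i+1) i i) ≤ 2 * st 1 (stdG (2*i+1) 1 1) := by
        rcases Nat.lt_or_ge i 3 with h3 | h3
        · have hii : i = 2 := by omega
          subst hii
          rw [e1, e2]
        · exact (hlt2 h3).le
      refine ⟨by omega, fun h6 => ?_⟩
      have : 3 ≤ i := by omega
      have := hlt2 this
      omega
    · -- n = 2i+2, even
      have hlt2 : 2 * st 1 (stdG (2*i+2) i i) < 2 * st 1 (stdG (2*i+2) 1 1) := by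
        rw [e1, e2]
        obtain ⟨j, rfl⟩ : ∃ j, i = j + 2 := ⟨i - 2, by omega⟩
        simp only [show 2*(j+2)+2-1 = 2*j+5 from by omega,
          show 2*(j+2)+2-((j+2)+(j+2)) = 2 from by omega,
          show 2*(j+2)+2-(j+2)-1 = j+3 from by omega,
          show 2*(j+2)+2-(1+1) = 2*j+4 from by omega,
          show 2*(j+2)+2-1-1 = 2*j+4 from by omega,
          show 2*j+5-1 = 2*j+4 from by omega]
        nlinarith [sq_nonneg j]
      exact ⟨by omega, fun _ => by omega⟩
  · -- 2 ≤ t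
    have ht2' : 2 ≤ t := htt2
    rw [st_two ht2', st_two ht2', sum_formula n i i t (by omega),
      sum_formula n 1 1 t (by omega)]
    have hc1 : (1:ℕ).choose t = 0 := Nat.choose_eq_zero_of_lt (by omega)
    rw [hc1]
    rcases hpar with rfl | rfl
    · -- n = 2i+1, odd; t ≤ i
      have hti : t ≤ i := by omega
      simp only [show 2*i+1-1 = 2*i from by omega,
        show 2*i+1-(i+i) = 1 from by omega,
        show 2*i+1-i-1 = i from by omega,
        show 2*i+1-(1+1) = 2*i-1 from by omega,
        show 2*i+1-1-1 = 2*i-1 from by omega]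
      rcases Nat.lt_or_ge i 3 with h3 | h3
      · -- i = 2, n = 5, t = 2
        have hii : i = 2 := by omega
        have htt : t = 2 := by omega
        subst hii; subst htt
        exact ⟨by decide, fun h6 => by omega⟩
      · have core := odd_core i t h3 ht2' hti
        have eL : i * (2*i).choose t + i * i.choose t + 1 * i.choose t
            = i * (2*i).choose t + (i+1) * i.choose t := by ring
        have eR : 1 * (2*i).choose t + 1 * 0 + (2*i-1) * (2*i-1).choose t
            = (2*i-1) * (2*i-1).choose t + (2*i).choose t := by ring
        rw [eL, eR]
        exact ⟨core.le, fun _ => core⟩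
    · -- n = 2i+2, even; t ≤ i+1
      have hti : t ≤ i + 1 := by omega
      simp only [show 2*i+2-1 = 2*i+1 from by omega,
        show 2*i+2-(i+i) = 2 from by omega,
        show 2*i+2-i-1 = i+1 from by omega,
        show 2*i+2-(1+1) = 2*i from by omega,
        show 2*i+2-1-1 = 2*i from by omega,
        show 2*i+1-1 = 2*i from by omega]
      rcases Nat.lt_or_ge i 3 with h3 | h3
      · -- i = 2, n = 6, t ∈ {2,3}
        have hii : i = 2 := by omega
        subst hii
        have htt : t = 2 ∨ t = 3 := by omega
        rcases htt with rfl | rfl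
        · exact ⟨by decide, fun _ => by decide⟩
        · exact ⟨by decide, fun _ => by decide⟩
      · have core := even_core i t h3 ht2' hti
        have eL : i * (2*i+1).choose t + i * i.choose t + 2 * (i+1).choose t
            = i * (2*i+1).choose t + i * i.choose t + 2 * (i+1).choose t := rfl
        have eR : 1 * (2*i+1).choose t + 1 * 0 + 2*i * (2*i).choose t
            = 2*i * (2*i).choose t + (2*i+1).choose t := by ring
        rw [eR]
        exact ⟨core.le, fun _ => core⟩
end

section
/- Let n be an even integer, t an integer with 3 ≤ t ≤ n/2, and n ≥ 2t. Then C(n-1, t)·((n/2 - t + 1)/(n - t) − 1/(n-1)) ≥ C(n/2, t); equivalently, (C(n-1,t)/C(n/2,t))·((n/2-t+1)/(n-t) − 1/(n-1)) ≥ 1. -/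
lemma desc_two (a k : ℕ) : 2 ^ k * Nat.descFactorial a k ≤ Nat.descFactorial (2 * a) k := by
  induction k with
  | zero => simp
  | succ k ih =>
    rw [Nat.descFactorial_succ, Nat.descFactorial_succ, pow_succ]
    calc 2 ^ k * 2 * ((a - k) * Nat.descFactorial a k)
        = (2 * (a - k)) * (2 ^ k * Nat.descFactorial a k) := by ring
      _ ≤ (2 * a - k) * Nat.descFactorial (2 * a) k :=
        Nat.mul_le_mul (by omega) ih

lemma keyH (m t : ℕ) (ht : 2 ≤ t) (htm : t ≤ m) :
    2 ^ (t - 2) * (2 * m - 1) * (2 * m - t) * Nat.choose m t ≤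
      m * (m - t + 1) * Nat.choose (2 * m - 1) t := by
  obtain ⟨s, rfl⟩ : ∃ s, t = s + 2 := ⟨t - 2, by omega⟩
  obtain ⟨p, rfl⟩ : ∃ p, m = p + 1 := ⟨m - 1, by omega⟩
  have h1 : 2 * (p + 1) - 1 = 2 * p + 1 := by omega
  have h2 : 2 * (p + 1) - (s + 2) = 2 * p - s := by omega
  have h3 : p + 1 - (s + 2) + 1 = p - s := by omega
  have h4 : s + 2 - 2 = s := by omega
  rw [h1, h2, h3, h4]
  have hfac : 0 < Nat.factorial (s + 2) := Nat.factorial_pos _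
  apply Nat.le_of_mul_le_mul_left _ hfac
  have e1 : (2 * p + 1).descFactorial (s + 2) =
      (2 * p + 1) * ((2 * p - s) * Nat.descFactorial (2 * p) s) := by
    rw [Nat.succ_descFactorial_succ, Nat.descFactorial_succ]
  have e2 : (p + 1).descFactorial (s + 2) =
      (p + 1) * ((p - s) * Nat.descFactorial p s) := by
    rw [Nat.succ_descFactorial_succ, Nat.descFactorial_succ]
  calc Nat.factorial (s + 2) * (2 ^ s * (2 * p + 1) * (2 * p - s) * Nat.choose (p + 1) (s + 2))
      = (2 * p + 1) * (2 * p - s) * ((p + 1) * (p - s)) * (2 ^ s * Nat.descFactorial p s) := by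
        rw [Nat.descFactorial_eq_factorial_mul_choose] at e2
        rw [show Nat.factorial (s + 2) * (2 ^ s * (2 * p + 1) * (2 * p - s) * Nat.choose (p + 1) (s + 2)) = 2 ^ s * (2 * p + 1) * (2 * p - s) * (Nat.factorial (s + 2) * Nat.choose (p + 1) (s + 2)) from by ring, e2]
        ring
    _ ≤ (2 * p + 1) * (2 * p - s) * ((p + 1) * (p - s)) * Nat.descFactorial (2 * p) s :=
        Nat.mul_le_mul_left _ (desc_two p s)
    _ = Nat.factorial (s + 2) * ((p + 1) * (p - s) * Nat.choose (2 * p + 1) (s + 2)) := by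
        rw [show Nat.factorial (s + 2) * ((p + 1) * (p - s) * Nat.choose (2 * p + 1) (s + 2)) = (p + 1) * (p - s) * (Nat.factorial (s + 2) * Nat.choose (2 * p + 1) (s + 2)) from by ring, ← Nat.descFactorial_eq_factorial_mul_choose, e1]
        ring

/-- Key binomial inequality in the even case of the inductive step: for even `n` and
`3 ≤ t ≤ n/2`, `C(n-1,t)·((n/2-t+1)/(n-t) - 1/(n-1)) ≥ C(n/2,t)` as real numbers;
equivalently `(C(n-1,t)/C(n/2,t))·((n/2-t+1)/(n-t) - 1/(n-1)) ≥ 1`. -/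
theorem stmt19 (n t : ℕ) (hn : Even n) (ht : 3 ≤ t) (htn : 2 * t ≤ n) :
    ((Nat.choose (n - 1) t : ℝ) *
        (((n : ℝ) / 2 - (t : ℝ) + 1) / ((n : ℝ) - (t : ℝ)) - 1 / ((n : ℝ) - 1)) ≥
      (Nat.choose (n / 2) t : ℝ)) ∧
    ((Nat.choose (n - 1) t : ℝ) / (Nat.choose (n / 2) t : ℝ) *
        (((n : ℝ) / 2 - (t : ℝ) + 1) / ((n : ℝ) - (t : ℝ)) - 1 / ((n : ℝ) - 1)) ≥ 1) := by
  obtain ⟨m, rfl⟩ := hn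
  have htm : t ≤ m := by omega
  have hm3 : 3 ≤ m := by omega
  have hdiv : (m + m) / 2 = m := by omega
  have hsub : m + m - 1 = 2 * m - 1 := by omega
  rw [hdiv, hsub]
  set M : ℝ := (m : ℝ) with hM
  set T : ℝ := (t : ℝ) with hT
  have hMT : T ≤ M := by rw [hM, hT]; exact_mod_cast htm
  have hT3 : (3 : ℝ) ≤ T := by rw [hT]; exact_mod_cast ht
  have hcast : ((m + m : ℕ) : ℝ) = 2 * M := by push_cast; ring
  rw [hcast]
  have hc2pos : (0 : ℝ) < (Nat.choose m t : ℝ) := by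
    exact_mod_cast Nat.choose_pos htm
  have hc1nonneg : (0 : ℝ) ≤ (Nat.choose (2 * m - 1) t : ℝ) := Nat.cast_nonneg _
  have hH : (2 : ℝ) ^ (t - 2) * (2 * M - 1) * (2 * M - T) * (Nat.choose m t : ℝ) ≤
      M * (M - T + 1) * (Nat.choose (2 * m - 1) t : ℝ) := by
    have := keyH m t (by omega) htm
    have hcast2 : ((2 * m - 1 : ℕ) : ℝ) = 2 * M - 1 := by
      push_cast [Nat.cast_sub (by omega : 1 ≤ 2 * m)]; ring
    have hcast3 : ((2 * m - t : ℕ) : ℝ) = 2 * M - T := by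
      push_cast [Nat.cast_sub (by omega : t ≤ 2 * m)]; ring
    have hcast4 : ((m - t + 1 : ℕ) : ℝ) = M - T + 1 := by
      push_cast [Nat.cast_sub htm]; ring
    calc (2 : ℝ) ^ (t - 2) * (2 * M - 1) * (2 * M - T) * (Nat.choose m t : ℝ)
        = ((2 ^ (t - 2) * (2 * m - 1) * (2 * m - t) * Nat.choose m t : ℕ) : ℝ) := by
          push_cast [hcast2, hcast3]; ring
      _ ≤ ((m * (m - t + 1) * Nat.choose (2 * m - 1) t : ℕ) : ℝ) := by exact_mod_cast this
      _ = M * (M - T + 1) * (Nat.choose (2 * m - 1) t : ℝ) := by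
          push_cast [hcast4]; ring
  have hP2 : (2 : ℝ) ≤ 2 ^ (t - 2) := by
    calc (2 : ℝ) = 2 ^ 1 := (pow_one 2).symm
    _ ≤ 2 ^ (t - 2) := by
        apply pow_le_pow_right₀ (by norm_num); omega
  set N : ℝ := (M - T + 1) * (2 * M - 1) - (2 * M - T) with hN
  have h2N : M * (M - T + 1) ≤ 2 * N := by
    have h1 : 0 ≤ (M - 1) * (M - T) := mul_nonneg (by linarith) (by linarith)
    nlinarith
  have hNnonneg : (0 : ℝ) ≤ N := by nlinarith
  have hPN : M * (M - T + 1) ≤ 2 ^ (t - 2) * N := by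
    calc M * (M - T + 1) ≤ 2 * N := h2N
      _ ≤ 2 ^ (t - 2) * N := mul_le_mul_of_nonneg_right hP2 hNnonneg
  have hd1 : (0 : ℝ) < 2 * M - T := by linarith
  have hd2 : (0 : ℝ) < 2 * M - 1 := by linarith
  have hMM : (0 : ℝ) < M * (M - T + 1) := by nlinarith
  -- main cleared inequality
  have hmain : (Nat.choose m t : ℝ) * ((2 * M - T) * (2 * M - 1)) ≤
      (Nat.choose (2 * m - 1) t : ℝ) * N := by
    have step1 : M * (M - T + 1) * ((Nat.choose m t : ℝ) * ((2 * M - T) * (2 * M - 1)))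
        ≤ M * (M - T + 1) * ((Nat.choose (2 * m - 1) t : ℝ) * N) := by
      calc M * (M - T + 1) * ((Nat.choose m t : ℝ) * ((2 * M - T) * (2 * M - 1)))
          ≤ (2 ^ (t - 2) * N) * ((Nat.choose m t : ℝ) * ((2 * M - T) * (2 * M - 1))) := by
            apply mul_le_mul_of_nonneg_right hPN
            positivity
        _ = N * (2 ^ (t - 2) * (2 * M - 1) * (2 * M - T) * (Nat.choose m t : ℝ)) := by ring
        _ ≤ N * (M * (M - T + 1) * (Nat.choose (2 * m - 1) t : ℝ)) :=
            mul_le_mul_of_nonneg_left hH hNnonneg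
        _ = M * (M - T + 1) * ((Nat.choose (2 * m - 1) t : ℝ) * N) := by ring
    exact le_of_mul_le_mul_left step1 hMM
  have hexpr : (2 * M / 2 - T + 1) / (2 * M - T) - 1 / (2 * M - 1) = N / ((2 * M - T) * (2 * M - 1)) := by
    field_simp
    exact hN.symm
  have part1 : (Nat.choose (2 * m - 1) t : ℝ) *
      ((2 * M / 2 - T + 1) / (2 * M - T) - 1 / (2 * M - 1)) ≥ (Nat.choose m t : ℝ) := by
    rw [hexpr, ge_iff_le, mul_div_assoc', le_div_iff₀ (by positivity)]
    linarith [hmain]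
  refine ⟨part1, ?_⟩
  rw [hexpr] at part1 ⊢
  rw [ge_iff_le, div_mul_eq_mul_div, le_div_iff₀ hc2pos, one_mul, mul_div_assoc']
  rw [mul_div_assoc'] at part1
  exact part1
end
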